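/- arXiv:1810.04553 — 7 statements merged into one kernel-verified Lean document; each statement's English description precedes it below -/
import Mathlib

section
/- Let r ≥ 1 be an integer, G = (V,E) a finite simple graph, and A ⊆ E. For a set V' ⊆ V define d'(v) = 1 if v ∈ V' and d'(v) = 0 otherwise, and give each edge uv ∈ E∖A the weight w'(uv) = d'(u) + d'(v). Then the following are equivalent: (i) there exists a maximal r-DCPS set S of G with S ∩ A = ∅; (ii) there exists a vertex cover V' of the graph (V, A) and a set S' ⊆ E∖A such that every vertex of V is incident to at most r edges of S' and Σ_{uv∈S'} (d'(u)+d'(v)) ≥ |V'|·r. -/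
/-- `S` is a vertex cover of the graph whose edge set is `A`. -/
def IsVertexCoverOf {V : Type*} (A : Set (Sym2 V)) (S : Set V) : Prop :=
  ∀ e ∈ A, ∃ v ∈ S, v ∈ e

/-- The weight of an edge `uv` is `d u + d v`. -/
def edgeW {V : Type*} (d : V → ℕ) : Sym2 V → ℕ :=
  Sym2.lift ⟨fun u v => d u + d v, fun u v => Nat.add_comm (d u) (d v)⟩

/-- Inserting an edge containing `v` bumps the `v`-degree by one. -/
lemma ncard_filter_insert_mem {V : Type*} [Fintype V] [DecidableEq V] (S : Set (Sym2 V))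
    (e : Sym2 V) (he : e ∉ S) (v : V) (hv : v ∈ e) :
    ({f ∈ insert e S | v ∈ f}).ncard = ({f ∈ S | v ∈ f}).ncard + 1 := by
  have hset : {f ∈ insert e S | v ∈ f} = insert e {f ∈ S | v ∈ f} := by
    ext f
    simp only [Set.mem_setOf_eq, Set.mem_insert_iff]
    constructor
    · rintro ⟨(rfl | hf), hvf⟩
      · exact Or.inl rfl
      · exact Or.inr ⟨hf, hvf⟩
    · rintro (rfl | ⟨hf, hvf⟩)
      · exact ⟨Or.inl rfl, hv⟩
      · exact ⟨Or.inr hf, hvf⟩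
  rw [hset, Set.ncard_insert_of_notMem (by simp [he]) (Set.toFinite _)]

/-- Double counting: the total edge weight equals the sum over vertices of
`d w` times the degree of `w`. -/
lemma sum_edgeW {V : Type*} [Fintype V] [DecidableEq V] (d : V → ℕ)
    (S' : Finset (Sym2 V)) (h : ∀ e ∈ S', ¬ e.IsDiag) :
    ∑ e ∈ S', edgeW d e
      = ∑ w : V, d w * ({e ∈ (↑S' : Set (Sym2 V)) | w ∈ e}).ncard := by
  classical
  have key : ∀ e ∈ S', edgeW d e = ∑ w : V, if w ∈ e then d w else 0 := by
    intro e he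
    induction e using Sym2.ind with
    | _ u v =>
      have huv : u ≠ v := by
        intro h'
        exact (h _ he) (by simp [h', Sym2.isDiag_iff_proj_eq])
      have : ∀ w : V, (w ∈ s(u, v)) = (w ∈ ({u, v} : Finset V)) := by
        intro w; simp [Sym2.mem_iff]
      simp only [this]
      rw [Finset.sum_ite_mem, Finset.univ_inter, Finset.sum_pair huv]
      rfl
  rw [Finset.sum_congr rfl key, Finset.sum_comm]
  refine Finset.sum_congr rfl fun w _ => ?_
  have h1 : {e ∈ (↑S' : Set (Sym2 V)) | w ∈ e}
      = ↑(S'.filter (fun e => w ∈ e)) := by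
    ext e; simp
  rw [h1, Set.ncard_coe_finset, ← Finset.sum_filter]
  simp [Finset.sum_const, Nat.mul_comm]

/-- Degrees as `ncard` versus as `Finset.filter` cardinalities. -/
lemma ncard_coe_filter {V : Type*} [DecidableEq V] (T : Finset (Sym2 V)) (v : V)
    [DecidablePred (fun e : Sym2 V => v ∈ e)] :
    ({e ∈ (↑T : Set (Sym2 V)) | v ∈ e}).ncard = (T.filter (fun e => v ∈ e)).card := by
  rw [← Set.ncard_coe_finset]
  congr 1
  ext e; simp

/-- `G` has a maximal `r`-DCPS set avoiding `A` iff there is a vertex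
cover `V'` of `(V,A)` and an `r`-DCPS set `S' ⊆ E∖A` of `w'`-weight at least `|V'|·r`,
where `w'(uv) = d'(u)+d'(v)` and `d'(v) = 1` if `v ∈ V'`, else `0`. -/
theorem stmt_4 {V : Type*} [Fintype V] [DecidableEq V] (r : ℕ) (hr : 1 ≤ r)
    (G : SimpleGraph V) (A : Set (Sym2 V)) (hA : A ⊆ G.edgeSet) :
    (∃ S : Set (Sym2 V), S ⊆ G.edgeSet ∧
        (∀ v : V, ({e ∈ S | v ∈ e}).ncard ≤ r) ∧
        (∀ e ∈ G.edgeSet \ S, ¬ ∀ v : V, ({f ∈ insert e S | v ∈ f}).ncard ≤ r) ∧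
        S ∩ A = ∅) ↔
      (∃ V' : Finset V, IsVertexCoverOf A ↑V' ∧
        ∃ S' : Finset (Sym2 V), ↑S' ⊆ G.edgeSet \ A ∧
          (∀ v : V, ({e ∈ (↑S' : Set (Sym2 V)) | v ∈ e}).ncard ≤ r) ∧
          V'.card * r ≤ ∑ e ∈ S', edgeW (fun v => if v ∈ V' then 1 else 0) e) := by
  classical
  constructor
  · -- forward
    rintro ⟨S, hSE, hdeg, hmax, hSA⟩
    -- every edge outside S has a saturated endpoint
    have hsat : ∀ e ∈ G.edgeSet \ S, ∃ v ∈ e, ({f ∈ S | v ∈ f}).ncard = r := by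
      intro e he
      have h1 := hmax e he
      push_neg at h1
      obtain ⟨v, hv⟩ := h1
      by_cases hve : v ∈ e
      · refine ⟨v, hve, le_antisymm (hdeg v) ?_⟩
        have h2 := ncard_filter_insert_mem S e he.2 v hve
        omega
      · exfalso
        have : {f ∈ insert e S | v ∈ f} = {f ∈ S | v ∈ f} := by
          ext f
          simp only [Set.mem_setOf_eq, Set.mem_insert_iff]
          constructor
          · rintro ⟨(rfl | hf), hvf⟩
            · exact absurd hvf hve
            · exact ⟨hf, hvf⟩
          · rintro ⟨hf, hvf⟩; exact ⟨Or.inr hf, hvf⟩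
        rw [this] at hv
        exact absurd (hdeg v) (not_le.mpr hv)
    set V'set : Set V := {v : V | ({f ∈ S | v ∈ f}).ncard = r} with hV'set
    set V' : Finset V := (Set.toFinite V'set).toFinset with hV'
    set S' : Finset (Sym2 V) := (Set.toFinite S).toFinset with hS'
    have hS'coe : (↑S' : Set (Sym2 V)) = S := Set.Finite.coe_toFinset _
    have hV'coe : (↑V' : Set V) = V'set := Set.Finite.coe_toFinset _
    refine ⟨V', ?_, S', ?_, ?_, ?_⟩
    · -- vertex cover
      intro e heA
      have heS : e ∉ S := by
        intro heS
        have : e ∈ S ∩ A := ⟨heS, heA⟩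
        rw [hSA] at this
        exact this
      obtain ⟨v, hve, hvr⟩ := hsat e ⟨hA heA, heS⟩
      refine ⟨v, ?_, hve⟩
      show v ∈ (↑V' : Set V)
      rw [hV'coe]
      exact hvr
    · -- S' ⊆ E \ A
      rw [hS'coe]
      intro e heS
      refine ⟨hSE heS, fun heA => ?_⟩
      have : e ∈ S ∩ A := ⟨heS, heA⟩
      rw [hSA] at this
      exact this
    · -- degrees
      intro v
      rw [hS'coe]
      exact hdeg v
    · -- weight
      have hnd : ∀ e ∈ S', ¬ e.IsDiag := fun e he =>
        G.not_isDiag_of_mem_edgeSet (hSE (hS'coe ▸ (Finset.mem_coe.mpr he)))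
      rw [sum_edgeW _ _ hnd]
      have : ∑ w : V, (if w ∈ V' then 1 else 0) *
            ({e ∈ (↑S' : Set (Sym2 V)) | w ∈ e}).ncard
          = ∑ w ∈ V', ({e ∈ (↑S' : Set (Sym2 V)) | w ∈ e}).ncard := by
        simp only [ite_mul, one_mul, zero_mul]
        rw [Finset.sum_ite_mem, Finset.univ_inter]
      rw [this]
      have hdegr : ∀ w ∈ V', ({e ∈ (↑S' : Set (Sym2 V)) | w ∈ e}).ncard = r := by
        intro w hw
        have : w ∈ V'set := hV'coe ▸ (Finset.mem_coe.mpr hw)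
        rw [hS'coe]
        exact this
      rw [Finset.sum_congr rfl hdegr, Finset.sum_const, smul_eq_mul]
  · -- backward
    rintro ⟨V', hcov, S', hS'sub, hS'deg, hsum⟩
    -- every vertex of V' is saturated in S'
    have hnd : ∀ e ∈ S', ¬ e.IsDiag := fun e he =>
      G.not_isDiag_of_mem_edgeSet (hS'sub (Finset.mem_coe.mpr he)).1
    have hsumeq : ∑ e ∈ S', edgeW (fun v => if v ∈ V' then 1 else 0) e
        = ∑ w ∈ V', ({e ∈ (↑S' : Set (Sym2 V)) | w ∈ e}).ncard := by
      rw [sum_edgeW _ _ hnd]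
      simp only [ite_mul, one_mul, zero_mul]
      rw [Finset.sum_ite_mem, Finset.univ_inter]
    have hsat : ∀ v ∈ V', ({e ∈ (↑S' : Set (Sym2 V)) | v ∈ e}).ncard = r := by
      by_contra hcon
      push_neg at hcon
      obtain ⟨v, hv, hvr⟩ := hcon
      have hlt : ∑ w ∈ V', ({e ∈ (↑S' : Set (Sym2 V)) | w ∈ e}).ncard
          < ∑ _w ∈ V', r := by
        refine Finset.sum_lt_sum (fun w _ => hS'deg w) ⟨v, hv, ?_⟩
        exact lt_of_le_of_ne (hS'deg v) hvr
      rw [Finset.sum_const, smul_eq_mul] at hlt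
      omega
    -- choose a maximal extension of S' inside E \ A
    set P : Finset (Sym2 V) → Prop := fun T =>
      S' ⊆ T ∧ (↑T : Set (Sym2 V)) ⊆ G.edgeSet \ A ∧
        ∀ v : V, (T.filter (fun e => v ∈ e)).card ≤ r with hP
    have hS'P : P S' := by
      refine ⟨le_refl _, hS'sub, fun v => ?_⟩
      rw [← ncard_coe_filter]
      exact hS'deg v
    have hF : (Finset.univ.filter P).Nonempty := ⟨S', by simpa using hS'P⟩
    obtain ⟨T, hTF, hTmax⟩ :=
      Finset.exists_max_image (Finset.univ.filter P) Finset.card hF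
    have hTP : P T := by simpa using hTF
    obtain ⟨hS'T, hTEA, hTdeg⟩ := hTP
    refine ⟨↑T, fun e he => (hTEA he).1, ?_, ?_, ?_⟩
    · intro v
      rw [ncard_coe_filter]
      exact hTdeg v
    · -- maximality
      intro e he hall
      have heT : e ∉ (↑T : Set (Sym2 V)) := he.2
      by_cases heA : e ∈ A
      · -- covered edge: saturated endpoint
        obtain ⟨v, hvV', hve⟩ := hcov e heA
        have hvV'' : v ∈ V' := hvV'
        have hmono : ({f ∈ (↑S' : Set (Sym2 V)) | v ∈ f}).ncard
            ≤ ({f ∈ (↑T : Set (Sym2 V)) | v ∈ f}).ncard := by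
          refine Set.ncard_le_ncard ?_ (Set.toFinite _)
          intro f hf
          exact ⟨hS'T hf.1, hf.2⟩
        have h1 := hsat v hvV''
        have h2 := ncard_filter_insert_mem (↑T) e heT v hve
        have h3 := hall v
        omega
      · -- not covered: could enlarge T
        have hallT : ∀ v : V, ((insert e T).filter (fun f => v ∈ f)).card ≤ r := by
          intro v
          rw [← ncard_coe_filter]
          have : ((↑(insert e T) : Set (Sym2 V))) = insert e (↑T : Set (Sym2 V)) := by
            simp
          rw [this]
          exact hall v
        have hPT' : P (insert e T) := by
          refine ⟨hS'T.trans (Finset.subset_insert _ _), ?_, hallT⟩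
          intro f hf
          rcases Finset.mem_insert.mp hf with rfl | hf
          · exact ⟨he.1, heA⟩
          · exact hTEA hf
        have hT'F : insert e T ∈ Finset.univ.filter P := by simpa using hPT'
        have := hTmax _ hT'F
        rw [Finset.card_insert_of_notMem (fun h => heT h)] at this
        omega
    · -- avoids A
      ext f
      simp only [Set.mem_inter_iff, Set.mem_empty_iff_false, iff_false]
      rintro ⟨hfT, hfA⟩
      exact (hTEA hfT).2 hfA
end

section
/- Let r ≥ 1 be an integer, G = (V,E) a finite simple graph, and U ⊆ E. Then there exists an inclusion-minimal r-edge cover X of G with U ⊆ X if and only if there exists an r-edge cover E' of G with U ⊆ E' ⊆ E such that the set S = {v ∈ V : v is an endpoint of some edge of U and v is incident to strictly more than r edges of E'} is an independent set of the graph (V, U), i.e., no edge of U has both of its endpoints in S. -/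
/-- `X` is an `r`-edge cover (of a graph on vertex type `V`): every vertex is incident
to at least `r` edges of `X`. -/
def IsRECover {V : Type*} (r : ℕ) (X : Set (Sym2 V)) : Prop :=
  ∀ v : V, r ≤ ({e ∈ X | v ∈ e}).ncard

lemma IsRECover.mono {V : Type*} [Fintype V] {r : ℕ} {X Y : Set (Sym2 V)}
    (h : IsRECover r X) (hXY : X ⊆ Y) : IsRECover r Y := by
  intro v
  refine (h v).trans (Set.ncard_le_ncard ?_ (Set.toFinite _))
  exact fun g hg => ⟨hXY hg.1, hg.2⟩

/-- there is an inclusion-minimal `r`-edge cover of `G` containing `U`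
iff there is an `r`-edge cover `E'` of `G` containing `U` such that the set
`S = {v : v is an endpoint of an edge of U and v is incident to more than r edges of E'}`
is independent in `(V,U)`. -/
theorem stmt_5 {V : Type*} [Fintype V] (r : ℕ) (hr : 1 ≤ r)
    (G : SimpleGraph V) (U : Set (Sym2 V)) (hU : U ⊆ G.edgeSet) :
    (∃ X : Set (Sym2 V), U ⊆ X ∧ X ⊆ G.edgeSet ∧ IsRECover r X ∧
        ∀ Y ⊂ X, ¬ IsRECover r Y) ↔
      (∃ E' : Set (Sym2 V), U ⊆ E' ∧ E' ⊆ G.edgeSet ∧ IsRECover r E' ∧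
        ∀ e ∈ U, ¬ ∀ v ∈ e,
          v ∈ {u : V | (∃ f ∈ U, u ∈ f) ∧ r < ({g ∈ E' | u ∈ g}).ncard}) := by
  constructor
  · rintro ⟨X, hUX, hXG, hcov, hmin⟩
    refine ⟨X, hUX, hXG, hcov, ?_⟩
    intro e heU hall
    apply hmin (X \ {e}) (Set.sdiff_singleton_ssubset.mpr (hUX heU))
    intro w
    by_cases hw : w ∈ e
    · have hlt : r < ({g ∈ X | w ∈ g}).ncard := (hall w hw).2
      have he' : e ∈ {g ∈ X | w ∈ g} := ⟨hUX heU, hw⟩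
      have hset : ({g ∈ X \ {e} | w ∈ g}) = {g ∈ X | w ∈ g} \ {e} := by
        ext g
        simp only [Set.mem_setOf_eq, Set.mem_diff, Set.mem_singleton_iff]
        tauto
      rw [hset]
      have := Set.ncard_diff_singleton_add_one he' (Set.toFinite _)
      omega
    · have hset : ({g ∈ X \ {e} | w ∈ g}) = {g ∈ X | w ∈ g} := by
        ext g
        simp only [Set.mem_setOf_eq, Set.mem_diff, Set.mem_singleton_iff]
        constructor
        · rintro ⟨⟨h1, -⟩, h2⟩; exact ⟨h1, h2⟩
        · rintro ⟨h1, h2⟩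
          exact ⟨⟨h1, fun h => hw (h ▸ h2)⟩, h2⟩
      rw [hset]
      exact hcov w
  · rintro ⟨E', hUE, hEG, hcov, hind⟩
    obtain ⟨X, ⟨hUX, hXE, hXcov⟩, hXmin⟩ :=
      Set.Finite.exists_minimalFor id {X | U ⊆ X ∧ X ⊆ E' ∧ IsRECover r X}
        (Set.toFinite _) ⟨E', hUE, le_refl _, hcov⟩
    refine ⟨X, hUX, fun g hg => hEG (hXE hg), hXcov, ?_⟩
    intro Y hYX hYcov
    obtain ⟨e, heX, heY⟩ := Set.exists_of_ssubset hYX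
    have hYsub : Y ⊆ X \ {e} := fun g hg =>
      ⟨hYX.1 hg, fun h => heY (h ▸ hg)⟩
    have hcov' : IsRECover r (X \ {e}) := hYcov.mono hYsub
    -- degree of any endpoint of e in X is > r
    have hdeg : ∀ w ∈ e, r < ({g ∈ E' | w ∈ g}).ncard := by
      intro w hw
      have he' : e ∉ ({g ∈ X \ {e} | w ∈ g}) := by
        simp
      have hins : ({g ∈ X | w ∈ g}) = insert e {g ∈ X \ {e} | w ∈ g} := by
        ext g
        simp only [Set.mem_setOf_eq, Set.mem_insert_iff, Set.mem_diff,
          Set.mem_singleton_iff]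
        constructor
        · rintro ⟨h1, h2⟩
          by_cases hge : g = e
          · exact Or.inl hge
          · exact Or.inr ⟨⟨h1, hge⟩, h2⟩
        · rintro (rfl | ⟨⟨h1, -⟩, h2⟩)
          · exact ⟨heX, hw⟩
          · exact ⟨h1, h2⟩
      have h1 : r ≤ ({g ∈ X \ {e} | w ∈ g}).ncard := hcov' w
      have h2 : ({g ∈ X | w ∈ g}).ncard = ({g ∈ X \ {e} | w ∈ g}).ncard + 1 := by
        rw [hins, Set.ncard_insert_of_notMem he' (Set.toFinite _)]
      have h3 : ({g ∈ X | w ∈ g}).ncard ≤ ({g ∈ E' | w ∈ g}).ncard :=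
        Set.ncard_le_ncard (fun g hg => ⟨hXE hg.1, hg.2⟩) (Set.toFinite _)
      omega
    by_cases heU : e ∈ U
    · exact hind e heU fun w hw => ⟨⟨e, heU, hw⟩, hdeg w hw⟩
    · -- X \ {e} contradicts minimality of X
      have hmem : X \ {e} ∈ {X | U ⊆ X ∧ X ⊆ E' ∧ IsRECover r X} :=
        ⟨fun g hg => ⟨hUX hg, fun h => heU (h ▸ hg)⟩,
         fun g hg => hXE hg.1, hcov'⟩
      have h := hXmin (j := X \ {e}) hmem (Set.diff_subset)
      simp only [id] at h
      exact (Set.sdiff_singleton_ssubset.mpr heX).2 h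
end

section
/- Let r ≥ 1 be an integer, G = (V,E) a finite simple graph, U ⊆ E, and S an independent set of the graph (V,U), i.e., no edge of U has both endpoints in S. For v ∈ V let deg_U(v) denote the number of edges of U incident to v. Suppose there exists a set M ⊆ E∖U such that: (a) for every v ∈ V, deg_U(v) + deg_M(v) ≥ r, and (b) for every endpoint v of an edge of U with v ∉ S, deg_U(v) + deg_M(v) ≤ r. Then there exists an inclusion-minimal r-edge cover X of G with U ⊆ X. -/
lemma exists_min_sub {α : Type*} [Finite α] (P : Set α → Prop) (X : Set α) (hX : P X) :
    ∃ X' ⊆ X, P X' ∧ ∀ Y ⊂ X', ¬ P Y := by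
  classical
  obtain ⟨n, hn⟩ : ∃ n, X.ncard = n := ⟨_, rfl⟩
  induction n using Nat.strong_induction_on generalizing X with
  | _ n ih =>
    by_cases h : ∀ Y ⊂ X, ¬ P Y
    · exact ⟨X, subset_rfl, hX, h⟩
    · push_neg at h
      obtain ⟨Y, hYX, hY⟩ := h
      obtain ⟨X', h1, h2, h3⟩ :=
        ih Y.ncard (hn ▸ Set.ncard_lt_ncard hYX (Set.toFinite X)) Y hY rfl
      exact ⟨X', h1.trans hYX.subset, h2, h3⟩

/-- if `S` is independent in `(V,U)` and some `M ⊆ E∖U` satisfies the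
lower bound (a) `deg_U(v)+deg_M(v) ≥ r` for all `v` and the upper bound (b)
`deg_U(v)+deg_M(v) ≤ r` for endpoints of `U` outside `S`, then `G` has an
inclusion-minimal `r`-edge cover containing `U`. -/
theorem stmt_6 {V : Type*} [Fintype V] (r : ℕ) (hr : 1 ≤ r)
    (G : SimpleGraph V) (U : Set (Sym2 V)) (hU : U ⊆ G.edgeSet)
    (S : Set V) (hS : ∀ e ∈ U, ¬ ∀ v ∈ e, v ∈ S)
    (M : Set (Sym2 V)) (hM : M ⊆ G.edgeSet \ U)
    (ha : ∀ v : V, r ≤ ({e ∈ U | v ∈ e}).ncard + ({e ∈ M | v ∈ e}).ncard)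
    (hb : ∀ v : V, (∃ e ∈ U, v ∈ e) → v ∉ S →
        ({e ∈ U | v ∈ e}).ncard + ({e ∈ M | v ∈ e}).ncard ≤ r) :
    ∃ X : Set (Sym2 V), U ⊆ X ∧ X ⊆ G.edgeSet ∧ IsRECover r X ∧
      ∀ Y ⊂ X, ¬ IsRECover r Y := by
  classical
  have hdisj : ∀ v : V, Disjoint {e ∈ U | v ∈ e} {e ∈ M | v ∈ e} := by
    intro v
    refine Set.disjoint_left.2 ?_
    rintro e ⟨heU, -⟩ ⟨heM, -⟩
    exact (hM heM).2 heU
  have hsplit : ∀ v : V,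
      {e ∈ U ∪ M | v ∈ e}.ncard = ({e ∈ U | v ∈ e}).ncard + ({e ∈ M | v ∈ e}).ncard := by
    intro v
    have : {e ∈ U ∪ M | v ∈ e} = {e ∈ U | v ∈ e} ∪ {e ∈ M | v ∈ e} := by
      ext e; simp [Set.mem_union, and_or_right]
    rw [this, Set.ncard_union_eq (hdisj v) (Set.toFinite _) (Set.toFinite _)]
  have hcov : IsRECover r (U ∪ M) := by
    intro v; rw [hsplit v]; exact ha v
  obtain ⟨X, hXsub, hXcov, hXmin⟩ := exists_min_sub (IsRECover r) (U ∪ M) hcov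
  have hXE : X ⊆ G.edgeSet := hXsub.trans (Set.union_subset hU (fun e he => (hM he).1))
  refine ⟨X, ?_, hXE, hXcov, hXmin⟩
  -- U ⊆ X
  intro e heU
  by_contra heX
  obtain ⟨v, hve, hvS⟩ : ∃ v ∈ e, v ∉ S := by
    have := hS e heU; push_neg at this; exact this
  have hub : {e ∈ U ∪ M | v ∈ e}.ncard ≤ r := by
    rw [hsplit v]; exact hb v ⟨e, heU, hve⟩ hvS
  have hsub : {f ∈ X | v ∈ f} ⊆ {f ∈ U ∪ M | v ∈ f} \ {e} := by
    rintro f ⟨hfX, hvf⟩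
    exact ⟨⟨hXsub hfX, hvf⟩, fun h => heX (h ▸ hfX)⟩
  have hlt : ({f ∈ X | v ∈ f}).ncard < {f ∈ U ∪ M | v ∈ f}.ncard := by
    calc ({f ∈ X | v ∈ f}).ncard ≤ ({f ∈ U ∪ M | v ∈ f} \ {e}).ncard :=
          Set.ncard_le_ncard hsub (Set.toFinite _)
      _ < {f ∈ U ∪ M | v ∈ f}.ncard := by
          apply Set.ncard_lt_ncard _ (Set.toFinite _)
          refine ⟨Set.diff_subset, fun h => ?_⟩
          have : e ∈ {f ∈ U ∪ M | v ∈ f} \ {e} := h ⟨Or.inl heU, hve⟩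
          exact this.2 rfl
  exact absurd (hXcov v) (by omega)
end

section
/- Let I be an instance of (3,B2)-SAT with variables x₁,…,xₙ and clauses c₁,…,c_m. Let G = (V,E) be the finite simple graph with V = {c₁,…,c_m} ∪ ⋃_{i=1}^{n} {xᵢ, lᵢ, mᵢ, rᵢ, ¬xᵢ}, whose edge set consists of: the path edges xᵢlᵢ, lᵢmᵢ, mᵢrᵢ, rᵢ¬xᵢ for each i; an edge c_j xᵢ whenever xᵢ occurs positively in clause c_j; and an edge c_j ¬xᵢ whenever xᵢ occurs negatively in clause c_j. Let U = {xᵢlᵢ, ¬xᵢrᵢ : 1 ≤ i ≤ n}. Then I is satisfiable if and only if G has a minimal edge cover C with U ⊆ C. -/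
/-- Vertices of the graph built from a (3,B2)-SAT instance for Ext Edge Cover:
one vertex per clause and, for each variable `xᵢ`, the path `xᵢ, lᵢ, mᵢ, rᵢ, ¬xᵢ`. -/
inductive V9 (n m : ℕ) : Type
  | clause : Fin m → V9 n m
  | pos : Fin n → V9 n m
  | l : Fin n → V9 n m
  | mid : Fin n → V9 n m
  | r : Fin n → V9 n m
  | neg : Fin n → V9 n m

/-- Edges: the path edges `xᵢlᵢ, lᵢmᵢ, mᵢrᵢ, rᵢ¬xᵢ` and the incidence edges
`c_j xᵢ` (positive occurrence) and `c_j ¬xᵢ` (negative occurrence). -/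
def E9 (n m : ℕ) (lit : Fin m → Fin 3 → Fin n × Bool) : Set (Sym2 (V9 n m)) :=
  {e | (∃ i : Fin n,
          e = s(V9.pos i, V9.l i) ∨ e = s(V9.l i, V9.mid i) ∨
          e = s(V9.mid i, V9.r i) ∨ e = s(V9.r i, V9.neg i)) ∨
       (∃ j : Fin m, ∃ k : Fin 3, ∃ i : Fin n,
          (lit j k = (i, true) ∧ e = s(V9.clause j, V9.pos i)) ∨
          (lit j k = (i, false) ∧ e = s(V9.clause j, V9.neg i)))}

/-- The pre-solution `U = {xᵢlᵢ, ¬xᵢrᵢ : 1 ≤ i ≤ n}`. -/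
def U9 (n m : ℕ) : Set (Sym2 (V9 n m)) :=
  {e | ∃ i : Fin n, e = s(V9.pos i, V9.l i) ∨ e = s(V9.neg i, V9.r i)}


lemma private_vertex {α : Type*} (C : Set (Sym2 α))
    (hcov : ∀ v, ∃ e ∈ C, v ∈ e)
    (hmin : ∀ C' : Set (Sym2 α), C' ⊂ C → ¬ ∀ v, ∃ e ∈ C', v ∈ e)
    {e : Sym2 α} (he : e ∈ C) : ∃ v ∈ e, ∀ e' ∈ C, v ∈ e' → e' = e := by
  have hsub : C \ {e} ⊂ C := by
    constructor
    · exact Set.diff_subset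
    · intro h
      exact (h he).2 rfl
  have h := hmin _ hsub
  push_neg at h
  obtain ⟨v, hv⟩ := h
  obtain ⟨e'', he'', hv''⟩ := hcov v
  have he''e : e'' = e := by
    by_contra hne
    exact hv e'' ⟨he'', hne⟩ hv''
  subst he''e
  refine ⟨v, hv'', ?_⟩
  intro e' he' hve'
  by_contra hne
  exact hv e' ⟨he', hne⟩ hve'

lemma cover_min_of_private {α : Type*} (C : Set (Sym2 α))
    (h : ∀ e ∈ C, ∃ v ∈ e, ∀ e' ∈ C, v ∈ e' → e' = e) :
    ∀ C' : Set (Sym2 α), C' ⊂ C → ¬ ∀ v, ∃ e ∈ C', v ∈ e := by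
  intro C' hC' hcov
  obtain ⟨e, heC, heC'⟩ := Set.exists_of_ssubset hC'
  obtain ⟨v, hv, huniq⟩ := h e heC
  obtain ⟨e', he', hve'⟩ := hcov v
  have := huniq e' (hC'.1 he') hve'
  subst this
  exact heC' he'

/-- a (3,B2)-SAT instance is satisfiable iff the constructed graph has a
minimal edge cover containing `U`. -/
theorem stmt_9 (n m : ℕ) (lit : Fin m → Fin 3 → Fin n × Bool)
    (hdist : ∀ j : Fin m, Function.Injective fun k : Fin 3 => (lit j k).1)
    (hpos : ∀ v : Fin n,
      (Finset.univ.filter fun p : Fin m × Fin 3 => lit p.1 p.2 = (v, true)).card = 2)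
    (hneg : ∀ v : Fin n,
      (Finset.univ.filter fun p : Fin m × Fin 3 => lit p.1 p.2 = (v, false)).card = 2) :
    (∃ T : Fin n → Bool, ∀ j : Fin m, ∃ k : Fin 3, T (lit j k).1 = (lit j k).2) ↔
      (∃ C : Set (Sym2 (V9 n m)), C ⊆ E9 n m lit ∧ U9 n m ⊆ C ∧
        (∀ v : V9 n m, ∃ e ∈ C, v ∈ e) ∧
        ∀ C' : Set (Sym2 (V9 n m)), C' ⊂ C → ¬ ∀ v : V9 n m, ∃ e ∈ C', v ∈ e) := by
  classical
  constructor
  · rintro ⟨T, hT⟩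
    choose k hk using hT
    refine ⟨{e | (∃ i, e = s(V9.pos i, V9.l i)) ∨ (∃ i, e = s(V9.neg i, V9.r i)) ∨
           (∃ i, T i = true ∧ e = s(V9.mid i, V9.r i)) ∨
           (∃ i, T i = false ∧ e = s(V9.l i, V9.mid i)) ∨
           (∃ j i, lit j (k j) = (i, true) ∧ e = s(V9.clause j, V9.pos i)) ∨
           (∃ j i, lit j (k j) = (i, false) ∧ e = s(V9.clause j, V9.neg i))},
        ?_, ?_, ?_, ?_⟩
    · -- C ⊆ E9
      rintro e (⟨i, rfl⟩ | ⟨i, rfl⟩ | ⟨i, _, rfl⟩ | ⟨i, _, rfl⟩ | ⟨j, i, h, rfl⟩ | ⟨j, i, h, rfl⟩)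
      · exact Or.inl ⟨i, Or.inl rfl⟩
      · exact Or.inl ⟨i, Or.inr (Or.inr (Or.inr (Sym2.eq_swap)))⟩
      · exact Or.inl ⟨i, Or.inr (Or.inr (Or.inl rfl))⟩
      · exact Or.inl ⟨i, Or.inr (Or.inl rfl)⟩
      · exact Or.inr ⟨j, k j, i, Or.inl ⟨h, rfl⟩⟩
      · exact Or.inr ⟨j, k j, i, Or.inr ⟨h, rfl⟩⟩
    · -- U9 ⊆ C
      rintro e ⟨i, rfl | rfl⟩
      · exact Or.inl ⟨i, rfl⟩
      · exact Or.inr (Or.inl ⟨i, rfl⟩)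
    · -- cover
      intro v
      cases v with
      | clause j =>
        rcases hb : lit j (k j) with ⟨i, b⟩
        cases b with
        | true =>
          exact ⟨s(V9.clause j, V9.pos i),
            Or.inr (Or.inr (Or.inr (Or.inr (Or.inl ⟨j, i, hb, rfl⟩)))), by simp⟩
        | false =>
          exact ⟨s(V9.clause j, V9.neg i),
            Or.inr (Or.inr (Or.inr (Or.inr (Or.inr ⟨j, i, hb, rfl⟩)))), by simp⟩
      | pos i => exact ⟨s(V9.pos i, V9.l i), Or.inl ⟨i, rfl⟩, by simp⟩
      | l i => exact ⟨s(V9.pos i, V9.l i), Or.inl ⟨i, rfl⟩, by simp⟩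
      | neg i => exact ⟨s(V9.neg i, V9.r i), Or.inr (Or.inl ⟨i, rfl⟩), by simp⟩
      | r i => exact ⟨s(V9.neg i, V9.r i), Or.inr (Or.inl ⟨i, rfl⟩), by simp⟩
      | mid i =>
        cases hTi : T i with
        | true => exact ⟨s(V9.mid i, V9.r i),
            Or.inr (Or.inr (Or.inl ⟨i, hTi, rfl⟩)), by simp⟩
        | false => exact ⟨s(V9.l i, V9.mid i),
            Or.inr (Or.inr (Or.inr (Or.inl ⟨i, hTi, rfl⟩))), by simp⟩
    · -- minimality
      apply cover_min_of_private
      rintro e (⟨i, rfl⟩ | ⟨i, rfl⟩ | ⟨i, hTi, rfl⟩ | ⟨i, hTi, rfl⟩ |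
        ⟨j, i, hl, rfl⟩ | ⟨j, i, hl, rfl⟩)
      · -- e = s(pos i, l i)
        cases hTi : T i with
        | true =>
          refine ⟨V9.l i, by simp, ?_⟩
          rintro e' (⟨i', rfl⟩ | ⟨i', rfl⟩ | ⟨i', h', rfl⟩ | ⟨i', h', rfl⟩ |
            ⟨j', i', h', rfl⟩ | ⟨j', i', h', rfl⟩) hv <;> simp_all
        | false =>
          refine ⟨V9.pos i, by simp, ?_⟩
          rintro e' (⟨i', rfl⟩ | ⟨i', rfl⟩ | ⟨i', h', rfl⟩ | ⟨i', h', rfl⟩ |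
            ⟨j', i', h', rfl⟩ | ⟨j', i', h', rfl⟩) hv
          · simp_all
          · simp_all
          · simp_all
          · simp_all
          · exfalso
            have hkk := hk j'
            rw [h'] at hkk
            simp only [Sym2.mem_iff] at hv
            rcases hv with hv | hv <;> simp_all
          · simp_all
      · -- e = s(neg i, r i)
        cases hTi : T i with
        | true =>
          refine ⟨V9.neg i, by simp, ?_⟩
          rintro e' (⟨i', rfl⟩ | ⟨i', rfl⟩ | ⟨i', h', rfl⟩ | ⟨i', h', rfl⟩ |
            ⟨j', i', h', rfl⟩ | ⟨j', i', h', rfl⟩) hv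
          · simp_all
          · simp_all
          · simp_all
          · simp_all
          · simp_all
          · exfalso
            have hkk := hk j'
            rw [h'] at hkk
            simp only [Sym2.mem_iff] at hv
            rcases hv with hv | hv <;> simp_all
        | false =>
          refine ⟨V9.r i, by simp, ?_⟩
          rintro e' (⟨i', rfl⟩ | ⟨i', rfl⟩ | ⟨i', h', rfl⟩ | ⟨i', h', rfl⟩ |
            ⟨j', i', h', rfl⟩ | ⟨j', i', h', rfl⟩) hv <;> simp_all
      · -- e = s(mid i, r i), T i = true
        refine ⟨V9.mid i, by simp, ?_⟩
        rintro e' (⟨i', rfl⟩ | ⟨i', rfl⟩ | ⟨i', h', rfl⟩ | ⟨i', h', rfl⟩ |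
          ⟨j', i', h', rfl⟩ | ⟨j', i', h', rfl⟩) hv <;> simp_all
      · -- e = s(l i, mid i), T i = false
        refine ⟨V9.mid i, by simp, ?_⟩
        rintro e' (⟨i', rfl⟩ | ⟨i', rfl⟩ | ⟨i', h', rfl⟩ | ⟨i', h', rfl⟩ |
          ⟨j', i', h', rfl⟩ | ⟨j', i', h', rfl⟩) hv <;> simp_all
      · -- e = s(clause j, pos i)
        refine ⟨V9.clause j, by simp, ?_⟩
        rintro e' (⟨i', rfl⟩ | ⟨i', rfl⟩ | ⟨i', h', rfl⟩ | ⟨i', h', rfl⟩ |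
          ⟨j', i', h', rfl⟩ | ⟨j', i', h', rfl⟩) hv <;>
          simp only [Sym2.mem_iff] at hv <;>
          rcases hv with hv | hv <;> simp_all
      · -- e = s(clause j, neg i)
        refine ⟨V9.clause j, by simp, ?_⟩
        rintro e' (⟨i', rfl⟩ | ⟨i', rfl⟩ | ⟨i', h', rfl⟩ | ⟨i', h', rfl⟩ |
          ⟨j', i', h', rfl⟩ | ⟨j', i', h', rfl⟩) hv <;>
          simp only [Sym2.mem_iff] at hv <;>
          rcases hv with hv | hv <;> simp_all
  · rintro ⟨C, hCE, hU, hcov, hmin⟩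
    have hpriv : ∀ {e : Sym2 (V9 n m)}, e ∈ C → ∃ v ∈ e, ∀ e' ∈ C, v ∈ e' → e' = e :=
      fun he => private_vertex C hcov hmin he
    have hBneg : ∀ i : Fin n, s(V9.mid i, V9.r i) ∈ C →
        ∀ j : Fin m, s(V9.clause j, V9.neg i) ∉ C := by
      intro i hmr j hclause
      have hnr : s(V9.neg i, V9.r i) ∈ C := hU ⟨i, Or.inr rfl⟩
      obtain ⟨v, hv, huniq⟩ := hpriv hnr
      rw [Sym2.mem_iff] at hv
      rcases hv with rfl | rfl
      · have := huniq _ hclause (by simp)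
        simp at this
      · have := huniq _ hmr (by simp)
        simp at this
    have hBpos : ∀ i : Fin n, s(V9.l i, V9.mid i) ∈ C →
        ∀ j : Fin m, s(V9.clause j, V9.pos i) ∉ C := by
      intro i hlm j hclause
      have hpl : s(V9.pos i, V9.l i) ∈ C := hU ⟨i, Or.inl rfl⟩
      obtain ⟨v, hv, huniq⟩ := hpriv hpl
      rw [Sym2.mem_iff] at hv
      rcases hv with rfl | rfl
      · have := huniq _ hclause (by simp)
        simp at this
      · have := huniq _ hlm (by simp)
        simp at this
    have hmid : ∀ i : Fin n, s(V9.l i, V9.mid i) ∈ C ∨ s(V9.mid i, V9.r i) ∈ C := by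
      intro i
      obtain ⟨e, heC, hme⟩ := hcov (V9.mid i)
      rcases hCE heC with ⟨i', h'⟩ | ⟨j, kk, i', h'⟩
      · rcases h' with rfl | rfl | rfl | rfl <;>
          simp only [Sym2.mem_iff] at hme <;>
          rcases hme with hme | hme <;> simp_all
      · exfalso
        rcases h' with ⟨_, rfl⟩ | ⟨_, rfl⟩ <;> simp at hme
    refine ⟨fun i => decide (s(V9.mid i, V9.r i) ∈ C), fun j => ?_⟩
    obtain ⟨e, heC, hce⟩ := hcov (V9.clause j)
    rcases hCE heC with ⟨i', h'⟩ | ⟨j', kk, i', h'⟩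
    · exfalso
      rcases h' with rfl | rfl | rfl | rfl <;> simp at hce
    · rcases h' with ⟨hl, rfl⟩ | ⟨hl, rfl⟩
      · have hjj : j' = j := by
          simp only [Sym2.mem_iff] at hce
          rcases hce with hce | hce <;> simp_all
        subst hjj
        refine ⟨kk, ?_⟩
        rw [hl]
        simp only [decide_eq_true_eq]
        rcases hmid i' with hlm | hmr
        · exact absurd heC (hBpos i' hlm j')
        · exact hmr
      · have hjj : j' = j := by
          simp only [Sym2.mem_iff] at hce
          rcases hce with hce | hce <;> simp_all
        subst hjj
        refine ⟨kk, ?_⟩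
        rw [hl]
        simp only [decide_eq_false_iff_not]
        intro hmr
        exact hBneg i' hmr j' heC
end

section
/- Let I be an instance of (3,B2)-SAT with variables x₁,…,xₙ and clauses c₁,…,c_m, where the three literals of each clause c are listed in a fixed order ℓ₁, ℓ₂, ℓ₃. Let G = (V,E) be the finite simple graph built as follows. For each clause c take seven vertices 1'_c, 2'_c, 1_c, 2_c, 3_c, 4_c, 5_c with edges 1'_c1_c, 1_c3_c, 2'_c2_c, 2_c3_c, 3_c4_c, 4_c5_c. For each variable x take three vertices x, ¬x, 1_x with edges x1_x and ¬x1_x. For each clause c with literals ℓ₁, ℓ₂, ℓ₃, add edges from 1'_c to the literal vertices of ℓ₁ and of ℓ₂, and an edge from 2'_c to the literal vertex of ℓ₃, where the literal vertex of a positive occurrence of x is x and of a negative occurrence is ¬x. Let U = {3_c, 4_c : clauses c} ∪ {1_x : variables x}. Then I is satisfiable if and only if G has a minimal dominating set S with U ⊆ S. -/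
/-- Vertices of the graph built from a (3,B2)-SAT instance for Ext Dominating Set:
per clause `c` the vertices `1'_c, 2'_c, 1_c, 2_c, 3_c, 4_c, 5_c`, per variable `x`
the vertices `x, ¬x, 1_x`. -/
inductive V10 (n m : ℕ) : Type
  | p1 : Fin m → V10 n m   -- 1'_c
  | p2 : Fin m → V10 n m   -- 2'_c
  | c1 : Fin m → V10 n m
  | c2 : Fin m → V10 n m
  | c3 : Fin m → V10 n m
  | c4 : Fin m → V10 n m
  | c5 : Fin m → V10 n m
  | pos : Fin n → V10 n m  -- x
  | neg : Fin n → V10 n m  -- ¬x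
  | vx : Fin n → V10 n m   -- 1_x

/-- The literal vertex of an occurrence: `x` for positive, `¬x` for negative. -/
def litV10 (n m : ℕ) : Fin n × Bool → V10 n m
  | (v, true) => V10.pos v
  | (v, false) => V10.neg v

/-- Edges of the constructed graph. -/
def E10 (n m : ℕ) (lit : Fin m → Fin 3 → Fin n × Bool) : Set (Sym2 (V10 n m)) :=
  {e | (∃ j : Fin m,
          e = s(V10.p1 j, V10.c1 j) ∨ e = s(V10.c1 j, V10.c3 j) ∨
          e = s(V10.p2 j, V10.c2 j) ∨ e = s(V10.c2 j, V10.c3 j) ∨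
          e = s(V10.c3 j, V10.c4 j) ∨ e = s(V10.c4 j, V10.c5 j)) ∨
       (∃ i : Fin n, e = s(V10.pos i, V10.vx i) ∨ e = s(V10.neg i, V10.vx i)) ∨
       (∃ j : Fin m,
          e = s(V10.p1 j, litV10 n m (lit j 0)) ∨
          e = s(V10.p1 j, litV10 n m (lit j 1)) ∨
          e = s(V10.p2 j, litV10 n m (lit j 2)))}

/-- The pre-solution `U = {3_c, 4_c : clauses c} ∪ {1_x : variables x}`. -/
def U10 (n m : ℕ) : Set (V10 n m) :=
  {v | (∃ j : Fin m, v = V10.c3 j ∨ v = V10.c4 j) ∨ (∃ i : Fin n, v = V10.vx i)}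

/-- `S` is a dominating set of the graph with edge set `E`. -/
def DomSet {V : Type*} (E : Set (Sym2 V)) (S : Set V) : Prop :=
  ∀ v : V, v ∈ S ∨ ∃ u ∈ S, s(u, v) ∈ E

namespace Aux10

def toSum {n m : ℕ} : V10 n m → (Fin 7 × Fin m) ⊕ (Fin 3 × Fin n)
  | .p1 j => .inl (0, j) | .p2 j => .inl (1, j) | .c1 j => .inl (2, j)
  | .c2 j => .inl (3, j) | .c3 j => .inl (4, j) | .c4 j => .inl (5, j)
  | .c5 j => .inl (6, j)
  | .pos i => .inr (0, i) | .neg i => .inr (1, i) | .vx i => .inr (2, i)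

instance {n m : ℕ} : Finite (V10 n m) := by
  apply Finite.of_injective toSum
  intro a b h
  cases a <;> cases b <;> simp_all [toSum]

variable {n m : ℕ} (lit : Fin m → Fin 3 → Fin n × Bool)

@[simp] lemma litV_eq_pos {q : Fin n × Bool} {i : Fin n} :
    litV10 n m q = V10.pos i ↔ q = (i, true) := by
  obtain ⟨a, b⟩ := q; cases b <;> simp [litV10, Prod.ext_iff]

@[simp] lemma litV_eq_neg {q : Fin n × Bool} {i : Fin n} :
    litV10 n m q = V10.neg i ↔ q = (i, false) := by
  obtain ⟨a, b⟩ := q; cases b <;> simp [litV10, Prod.ext_iff]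

@[simp] lemma pos_eq_litV {q : Fin n × Bool} {i : Fin n} :
    V10.pos i = litV10 n m q ↔ q = (i, true) := by
  rw [eq_comm]; exact litV_eq_pos

@[simp] lemma neg_eq_litV {q : Fin n × Bool} {i : Fin n} :
    V10.neg i = litV10 n m q ↔ q = (i, false) := by
  rw [eq_comm]; exact litV_eq_neg

@[simp] lemma litV_ne_p1 {q : Fin n × Bool} {j : Fin m} : litV10 n m q ≠ V10.p1 j := by
  obtain ⟨a, b⟩ := q; cases b <;> simp [litV10]
@[simp] lemma litV_ne_p2 {q : Fin n × Bool} {j : Fin m} : litV10 n m q ≠ V10.p2 j := by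
  obtain ⟨a, b⟩ := q; cases b <;> simp [litV10]
@[simp] lemma litV_ne_c1 {q : Fin n × Bool} {j : Fin m} : litV10 n m q ≠ V10.c1 j := by
  obtain ⟨a, b⟩ := q; cases b <;> simp [litV10]
@[simp] lemma litV_ne_c2 {q : Fin n × Bool} {j : Fin m} : litV10 n m q ≠ V10.c2 j := by
  obtain ⟨a, b⟩ := q; cases b <;> simp [litV10]
@[simp] lemma litV_ne_c3 {q : Fin n × Bool} {j : Fin m} : litV10 n m q ≠ V10.c3 j := by
  obtain ⟨a, b⟩ := q; cases b <;> simp [litV10]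
@[simp] lemma litV_ne_c4 {q : Fin n × Bool} {j : Fin m} : litV10 n m q ≠ V10.c4 j := by
  obtain ⟨a, b⟩ := q; cases b <;> simp [litV10]
@[simp] lemma litV_ne_c5 {q : Fin n × Bool} {j : Fin m} : litV10 n m q ≠ V10.c5 j := by
  obtain ⟨a, b⟩ := q; cases b <;> simp [litV10]
@[simp] lemma litV_ne_vx {q : Fin n × Bool} {i : Fin n} : litV10 n m q ≠ V10.vx i := by
  obtain ⟨a, b⟩ := q; cases b <;> simp [litV10]
@[simp] lemma p1_ne_litV {q : Fin n × Bool} {j : Fin m} : V10.p1 j ≠ litV10 n m q :=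
  fun h => litV_ne_p1 h.symm
@[simp] lemma p2_ne_litV {q : Fin n × Bool} {j : Fin m} : V10.p2 j ≠ litV10 n m q :=
  fun h => litV_ne_p2 h.symm
@[simp] lemma c1_ne_litV {q : Fin n × Bool} {j : Fin m} : V10.c1 j ≠ litV10 n m q :=
  fun h => litV_ne_c1 h.symm
@[simp] lemma c2_ne_litV {q : Fin n × Bool} {j : Fin m} : V10.c2 j ≠ litV10 n m q :=
  fun h => litV_ne_c2 h.symm
@[simp] lemma c3_ne_litV {q : Fin n × Bool} {j : Fin m} : V10.c3 j ≠ litV10 n m q :=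
  fun h => litV_ne_c3 h.symm
@[simp] lemma c4_ne_litV {q : Fin n × Bool} {j : Fin m} : V10.c4 j ≠ litV10 n m q :=
  fun h => litV_ne_c4 h.symm
@[simp] lemma c5_ne_litV {q : Fin n × Bool} {j : Fin m} : V10.c5 j ≠ litV10 n m q :=
  fun h => litV_ne_c5 h.symm
@[simp] lemma vx_ne_litV {q : Fin n × Bool} {i : Fin n} : V10.vx i ≠ litV10 n m q :=
  fun h => litV_ne_vx h.symm

/-! ### edge intro lemmas -/

lemma e_p1c1 (j : Fin m) : s(V10.p1 j, V10.c1 j) ∈ E10 n m lit := Or.inl ⟨j, Or.inl rfl⟩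
lemma e_c1c3 (j : Fin m) : s(V10.c1 j, V10.c3 j) ∈ E10 n m lit :=
  Or.inl ⟨j, Or.inr (Or.inl rfl)⟩
lemma e_p2c2 (j : Fin m) : s(V10.p2 j, V10.c2 j) ∈ E10 n m lit :=
  Or.inl ⟨j, Or.inr (Or.inr (Or.inl rfl))⟩
lemma e_c2c3 (j : Fin m) : s(V10.c2 j, V10.c3 j) ∈ E10 n m lit :=
  Or.inl ⟨j, Or.inr (Or.inr (Or.inr (Or.inl rfl)))⟩
lemma e_c3c4 (j : Fin m) : s(V10.c3 j, V10.c4 j) ∈ E10 n m lit :=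
  Or.inl ⟨j, Or.inr (Or.inr (Or.inr (Or.inr (Or.inl rfl))))⟩
lemma e_c4c5 (j : Fin m) : s(V10.c4 j, V10.c5 j) ∈ E10 n m lit :=
  Or.inl ⟨j, Or.inr (Or.inr (Or.inr (Or.inr (Or.inr rfl))))⟩
lemma e_posvx (i : Fin n) : s(V10.pos i, V10.vx i) ∈ E10 n m lit :=
  Or.inr (Or.inl ⟨i, Or.inl rfl⟩)
lemma e_negvx (i : Fin n) : s(V10.neg i, V10.vx i) ∈ E10 n m lit :=
  Or.inr (Or.inl ⟨i, Or.inr rfl⟩)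
lemma e_p1l0 (j : Fin m) : s(V10.p1 j, litV10 n m (lit j 0)) ∈ E10 n m lit :=
  Or.inr (Or.inr ⟨j, Or.inl rfl⟩)
lemma e_p1l1 (j : Fin m) : s(V10.p1 j, litV10 n m (lit j 1)) ∈ E10 n m lit :=
  Or.inr (Or.inr ⟨j, Or.inr (Or.inl rfl)⟩)
lemma e_p2l2 (j : Fin m) : s(V10.p2 j, litV10 n m (lit j 2)) ∈ E10 n m lit :=
  Or.inr (Or.inr ⟨j, Or.inr (Or.inr rfl)⟩)

lemma e_swap {a b : V10 n m} (h : s(a, b) ∈ E10 n m lit) : s(b, a) ∈ E10 n m lit := by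
  rwa [Sym2.eq_swap]

/-! ### adjacency elimination lemmas -/

lemma adj_vx {u : V10 n m} {i : Fin n} (h : s(V10.vx i, u) ∈ E10 n m lit) :
    u = V10.pos i ∨ u = V10.neg i := by
  rcases h with ⟨j, h | h | h | h | h | h⟩ | ⟨i', h | h⟩ | ⟨j, h | h | h⟩ <;>
    simp only [Sym2.eq_iff] at h <;> simp_all <;> tauto

lemma adj_c3 {u : V10 n m} {j : Fin m} (h : s(V10.c3 j, u) ∈ E10 n m lit) :
    u = V10.c1 j ∨ u = V10.c2 j ∨ u = V10.c4 j := by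
  rcases h with ⟨j', h | h | h | h | h | h⟩ | ⟨i', h | h⟩ | ⟨j', h | h | h⟩ <;>
    simp only [Sym2.eq_iff] at h <;> simp_all <;> tauto

lemma adj_p1 {u : V10 n m} {j : Fin m} (h : s(u, V10.p1 j) ∈ E10 n m lit) :
    u = V10.c1 j ∨ u = litV10 n m (lit j 0) ∨ u = litV10 n m (lit j 1) := by
  rcases h with ⟨j', h | h | h | h | h | h⟩ | ⟨i', h | h⟩ | ⟨j', h | h | h⟩ <;>
    simp only [Sym2.eq_iff] at h <;> simp_all <;> tauto

lemma adj_p2 {u : V10 n m} {j : Fin m} (h : s(u, V10.p2 j) ∈ E10 n m lit) :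
    u = V10.c2 j ∨ u = litV10 n m (lit j 2) := by
  rcases h with ⟨j', h | h | h | h | h | h⟩ | ⟨i', h | h⟩ | ⟨j', h | h | h⟩ <;>
    simp only [Sym2.eq_iff] at h <;> simp_all <;> tauto

end Aux10

namespace Aux10
variable {n m : ℕ} (lit : Fin m → Fin 3 → Fin n × Bool)

/-- The dominating set built from an assignment. -/
def Sset (T : Fin n → Bool) : Set (V10 n m) := fun v =>
  match v with
  | .c3 _ => True
  | .c4 _ => True
  | .vx _ => True
  | .pos i => T i = true
  | .neg i => T i = false
  | .c1 j => ¬ T (lit j 0).1 = (lit j 0).2 ∧ ¬ T (lit j 1).1 = (lit j 1).2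
  | .c2 j => ¬ T (lit j 2).1 = (lit j 2).2
  | _ => False

lemma litV_mem (T : Fin n → Bool) {q : Fin n × Bool} (h : T q.1 = q.2) :
    litV10 n m q ∈ Sset lit T := by
  obtain ⟨i, b⟩ := q; cases b <;> simpa [litV10, Sset, Membership.mem, Set.Mem] using h

lemma dom_Sset (T : Fin n → Bool) : DomSet (E10 n m lit) (Sset lit T) := by
  intro v
  cases v with
  | p1 j =>
    by_cases h0 : T (lit j 0).1 = (lit j 0).2
    · exact Or.inr ⟨litV10 n m (lit j 0), litV_mem lit T h0, e_swap lit (e_p1l0 lit j)⟩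
    · by_cases h1 : T (lit j 1).1 = (lit j 1).2
      · exact Or.inr ⟨litV10 n m (lit j 1), litV_mem lit T h1, e_swap lit (e_p1l1 lit j)⟩
      · exact Or.inr ⟨V10.c1 j, ⟨h0, h1⟩, e_swap lit (e_p1c1 lit j)⟩
  | p2 j =>
    by_cases h2 : T (lit j 2).1 = (lit j 2).2
    · exact Or.inr ⟨litV10 n m (lit j 2), litV_mem lit T h2, e_swap lit (e_p2l2 lit j)⟩
    · exact Or.inr ⟨V10.c2 j, h2, e_swap lit (e_p2c2 lit j)⟩
  | c1 j => exact Or.inr ⟨V10.c3 j, trivial, e_swap lit (e_c1c3 lit j)⟩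
  | c2 j => exact Or.inr ⟨V10.c3 j, trivial, e_swap lit (e_c2c3 lit j)⟩
  | c3 j => exact Or.inl trivial
  | c4 j => exact Or.inl trivial
  | c5 j => exact Or.inr ⟨V10.c4 j, trivial, e_c4c5 lit j⟩
  | pos i =>
    by_cases h : T i = true
    · exact Or.inl h
    · exact Or.inr ⟨V10.vx i, trivial, e_swap lit (e_posvx lit i)⟩
  | neg i =>
    by_cases h : T i = false
    · exact Or.inl h
    · exact Or.inr ⟨V10.vx i, trivial, e_swap lit (e_negvx lit i)⟩
  | vx i => exact Or.inl trivial

lemma priv_Sset (T : Fin n → Bool)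
    (hsat : ∀ j : Fin m, ∃ k : Fin 3, T (lit j k).1 = (lit j k).2) :
    ∀ u ∈ U10 n m, ∃ p : V10 n m,
      ∀ w ∈ Sset lit T, (w = p ∨ s(w, p) ∈ E10 n m lit) → w = u := by
  rintro u (⟨j, hj | hj⟩ | ⟨i, hi⟩)
  · -- u = c3 j
    subst hj
    by_cases hf : T (lit j 0).1 = (lit j 0).2 ∨ T (lit j 1).1 = (lit j 1).2
    · refine ⟨V10.c1 j, ?_⟩
      intro w hw h
      cases w <;>
        rcases h with h | (⟨j', h | h | h | h | h | h⟩ | ⟨i', h | h⟩ | ⟨j', h | h | h⟩) <;>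
        (try simp only [Sym2.eq_iff] at h) <;> simp_all [Sset, Membership.mem, Set.Mem] <;> tauto
    · push_neg at hf
      have h2 : T (lit j 2).1 = (lit j 2).2 := by
        obtain ⟨k, hk⟩ := hsat j
        fin_cases k
        · exact absurd hk hf.1
        · exact absurd hk hf.2
        · exact hk
      refine ⟨V10.c2 j, ?_⟩
      intro w hw h
      cases w <;>
        rcases h with h | (⟨j', h | h | h | h | h | h⟩ | ⟨i', h | h⟩ | ⟨j', h | h | h⟩) <;>
        (try simp only [Sym2.eq_iff] at h) <;> simp_all [Sset, Membership.mem, Set.Mem] <;> tauto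
  · -- u = c4 j
    subst hj
    refine ⟨V10.c5 j, ?_⟩
    intro w hw h
    cases w <;>
      rcases h with h | (⟨j', h | h | h | h | h | h⟩ | ⟨i', h | h⟩ | ⟨j', h | h | h⟩) <;>
      (try simp only [Sym2.eq_iff] at h) <;> simp_all [Sset, Membership.mem, Set.Mem] <;> tauto
  · -- u = vx i
    subst hi
    refine ⟨litV10 n m (i, !T i), ?_⟩
    intro w hw h
    cases hb : T i <;> rw [hb] at h <;> simp only [Bool.not_false, Bool.not_true, litV10] at h <;>
      (cases w <;>
        rcases h with h | (⟨j', h | h | h | h | h | h⟩ | ⟨i', h | h⟩ | ⟨j', h | h | h⟩) <;>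
        (try simp only [Sym2.eq_iff] at h) <;> simp_all [Sset, Membership.mem, Set.Mem] <;> tauto)

lemma exists_minimal {V : Type*} [Finite V] (E : Set (Sym2 V)) (S : Set V)
    (hS : DomSet E S) :
    ∃ T, T ⊆ S ∧ DomSet E T ∧ ∀ S' : Set V, S' ⊂ T → ¬ DomSet E S' := by
  classical
  have hne : {k | ∃ T : Set V, T ⊆ S ∧ DomSet E T ∧ T.ncard = k}.Nonempty :=
    ⟨S.ncard, S, subset_rfl, hS, rfl⟩
  obtain ⟨T, hTS, hTD, hcard⟩ := Nat.sInf_mem hne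
  refine ⟨T, hTS, hTD, ?_⟩
  intro S' hsub hD
  have hlt : S'.ncard < T.ncard := Set.ncard_lt_ncard hsub (Set.toFinite T)
  have hmem : S'.ncard ∈ {k | ∃ T : Set V, T ⊆ S ∧ DomSet E T ∧ T.ncard = k} :=
    ⟨S', hsub.subset.trans hTS, hD, rfl⟩
  have hle := Nat.sInf_le hmem
  omega

end Aux10

namespace Aux10
variable {n m : ℕ} {lit : Fin m → Fin 3 → Fin n × Bool}

lemma not_both {S : Set (V10 n m)} (hUS : U10 n m ⊆ S)
    (hdom : DomSet (E10 n m lit) S)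
    (hmin : ∀ S' : Set (V10 n m), S' ⊂ S → ¬ DomSet (E10 n m lit) S')
    (i : Fin n) : ¬ (V10.pos i ∈ S ∧ V10.neg i ∈ S) := by
  rintro ⟨hp, hn⟩
  have hvx : V10.vx i ∈ S := hUS (Or.inr ⟨i, rfl⟩)
  refine hmin (S \ {V10.vx i}) (Set.sdiff_singleton_ssubset.mpr hvx) ?_
  intro v
  rcases hdom v with hv | ⟨u, hu, hue⟩
  · by_cases hvv : v = V10.vx i
    · subst hvv
      exact Or.inr ⟨V10.pos i, ⟨hp, by simp⟩, e_posvx lit i⟩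
    · exact Or.inl ⟨hv, by simpa using hvv⟩
  · by_cases huv : u = V10.vx i
    · subst huv
      rcases adj_vx lit hue with rfl | rfl
      · exact Or.inl ⟨hp, by simp⟩
      · exact Or.inl ⟨hn, by simp⟩
    · exact Or.inr ⟨u, ⟨hu, by simpa using huv⟩, hue⟩

lemma clause_lemma {S : Set (V10 n m)} (hUS : U10 n m ⊆ S)
    (hdom : DomSet (E10 n m lit) S)
    (hmin : ∀ S' : Set (V10 n m), S' ⊂ S → ¬ DomSet (E10 n m lit) S')
    (j : Fin m) : ∃ k : Fin 3, litV10 n m (lit j k) ∈ S := by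
  have hc3 : V10.c3 j ∈ S := hUS (Or.inl ⟨j, Or.inl rfl⟩)
  have hc4 : V10.c4 j ∈ S := hUS (Or.inl ⟨j, Or.inr rfl⟩)
  have hnd := hmin (S \ {V10.c3 j}) (Set.sdiff_singleton_ssubset.mpr hc3)
  rw [DomSet] at hnd
  push_neg at hnd
  obtain ⟨p, hp1, hp2⟩ := hnd
  have hpne : p ≠ V10.c3 j := by
    rintro rfl
    exact hp2 (V10.c4 j) ⟨hc4, by simp⟩ (e_swap lit (e_c3c4 lit j))
  have hpS : p ∉ S := fun h => hp1 ⟨h, by simpa using hpne⟩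
  obtain ⟨u, huS, hue⟩ := (hdom p).resolve_left hpS
  have hu3 : u = V10.c3 j := by
    by_contra h
    exact hp2 u ⟨huS, by simpa using h⟩ hue
  subst hu3
  rcases adj_c3 lit hue with rfl | rfl | rfl
  · -- p = c1 j
    have hp1S : V10.p1 j ∉ S := fun h =>
      hp2 (V10.p1 j) ⟨h, by simp⟩ (e_p1c1 lit j)
    obtain ⟨u, huS, hue⟩ := (hdom (V10.p1 j)).resolve_left hp1S
    rcases adj_p1 lit hue with rfl | rfl | rfl
    · exact absurd huS hpS
    · exact ⟨0, huS⟩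
    · exact ⟨1, huS⟩
  · -- p = c2 j
    have hp2S : V10.p2 j ∉ S := fun h =>
      hp2 (V10.p2 j) ⟨h, by simp⟩ (e_p2c2 lit j)
    obtain ⟨u, huS, hue⟩ := (hdom (V10.p2 j)).resolve_left hp2S
    rcases adj_p2 lit hue with rfl | rfl
    · exact absurd huS hpS
    · exact ⟨2, huS⟩
  · exact absurd hc4 hpS

end Aux10

/-- a (3,B2)-SAT instance is satisfiable iff the constructed graph has a
minimal dominating set containing `U`. -/
theorem stmt_10 (n m : ℕ) (lit : Fin m → Fin 3 → Fin n × Bool)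
    (hdist : ∀ j : Fin m, Function.Injective fun k : Fin 3 => (lit j k).1)
    (hpos : ∀ v : Fin n,
      (Finset.univ.filter fun p : Fin m × Fin 3 => lit p.1 p.2 = (v, true)).card = 2)
    (hneg : ∀ v : Fin n,
      (Finset.univ.filter fun p : Fin m × Fin 3 => lit p.1 p.2 = (v, false)).card = 2) :
    (∃ T : Fin n → Bool, ∀ j : Fin m, ∃ k : Fin 3, T (lit j k).1 = (lit j k).2) ↔
      (∃ S : Set (V10 n m), U10 n m ⊆ S ∧ DomSet (E10 n m lit) S ∧
        ∀ S' : Set (V10 n m), S' ⊂ S → ¬ DomSet (E10 n m lit) S') := by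
  constructor
  · rintro ⟨T, hT⟩
    obtain ⟨Smin, hsub, hdom, hmin⟩ :=
      Aux10.exists_minimal (E10 n m lit) (Aux10.Sset lit T) (Aux10.dom_Sset lit T)
    refine ⟨Smin, ?_, hdom, hmin⟩
    intro u hu
    obtain ⟨p, hp⟩ := Aux10.priv_Sset lit T hT u hu
    rcases hdom p with hpT | ⟨w, hwT, hwe⟩
    · have := hp p (hsub hpT) (Or.inl rfl)
      rwa [this] at hpT
    · have := hp w (hsub hwT) (Or.inr hwe)
      rwa [this] at hwT
  · rintro ⟨S, hUS, hdom, hmin⟩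
    classical
    refine ⟨fun i => if V10.pos i ∈ S then true else false, ?_⟩
    intro j
    obtain ⟨k, hk⟩ := Aux10.clause_lemma hUS hdom hmin j
    refine ⟨k, ?_⟩
    rcases hq : lit j k with ⟨i, b⟩
    rw [hq] at hk
    cases b
    · -- neg i ∈ S
      have hpn : V10.pos i ∉ S := fun h =>
        Aux10.not_both hUS hdom hmin i ⟨h, by simpa [litV10] using hk⟩
      simp [hq, hpn]
    · have : V10.pos i ∈ S := by simpa [litV10] using hk
      simp [hq, this]
end

section
/- Let X be a finite ground set, 𝒮 = {S₁,…,S_m} a collection of subsets of X, and U ⊆ X. Build the finite simple graph G = (V,E) as follows: V = X ∪ {s₁,…,s_m} ∪ {y, y'} ∪ {z₁, z₂, z₃, z₄}, with edges x sᵢ for every x ∈ X and i with x ∈ Sᵢ; the edge y'y and edges xy for every x ∈ X; and the path edges z₁z₂, z₂z₃, z₃z₄ together with edges z₁sᵢ for every 1 ≤ i ≤ m. Let U' = U ∪ {y, z₂, z₃}. Then G has a minimal dominating set S with U' ⊆ S if and only if there exists an inclusion-minimal hitting set H of (X, 𝒮) with U ⊆ H. -/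
/-- Vertices of the graph built from a hitting-set instance `(X, S₁,…,S_m)`:
the ground elements, one vertex per hyperedge, and the extra vertices
`y, y', z₁, z₂, z₃, z₄`. -/
inductive V13 (X : Type) (m : ℕ) : Type
  | elem : X → V13 X m
  | sv : Fin m → V13 X m
  | y : V13 X m
  | y' : V13 X m
  | z1 : V13 X m
  | z2 : V13 X m
  | z3 : V13 X m
  | z4 : V13 X m

/-- Edges of the constructed graph. -/
def E13 (X : Type) (m : ℕ) (S : Fin m → Set X) : Set (Sym2 (V13 X m)) :=
  {e | (∃ x : X, ∃ i : Fin m, x ∈ S i ∧ e = s(V13.elem x, V13.sv i)) ∨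
       e = s(V13.y', V13.y) ∨
       (∃ x : X, e = s(V13.elem x, V13.y)) ∨
       e = s(V13.z1, V13.z2) ∨ e = s(V13.z2, V13.z3) ∨ e = s(V13.z3, V13.z4) ∨
       (∃ i : Fin m, e = s(V13.z1, V13.sv i))}

/-- The pre-solution `U' = U ∪ {y, z₂, z₃}` (as vertices of the constructed graph). -/
def U13 (X : Type) (m : ℕ) (U : Set X) : Set (V13 X m) :=
  (V13.elem '' U) ∪ {V13.y, V13.z2, V13.z3}

section helpers
variable {X : Type} {m : ℕ} {S : Fin m → Set X}

lemma mem_E_z2' (v : V13 X m) : s(V13.z2, v) ∈ E13 X m S ↔ v = V13.z1 ∨ v = V13.z3 := by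
  simp [E13, Sym2.eq_iff]
lemma mem_E_y'' (u : V13 X m) : s(u, V13.y') ∈ E13 X m S ↔ u = V13.y := by
  simp [E13, Sym2.eq_iff]
lemma mem_E_sv' (u : V13 X m) (i : Fin m) :
    s(u, V13.sv i) ∈ E13 X m S ↔ (∃ x, x ∈ S i ∧ u = V13.elem x) ∨ u = V13.z1 := by
  simp [E13, Sym2.eq_iff]
lemma mem_E_z1' (u : V13 X m) : s(u, V13.z1) ∈ E13 X m S ↔ u = V13.z2 ∨ ∃ i, u = V13.sv i := by
  simp [E13, Sym2.eq_iff]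
lemma mem_E_z4' (u : V13 X m) : s(u, V13.z4) ∈ E13 X m S ↔ u = V13.z3 := by
  simp [E13, Sym2.eq_iff]
lemma mem_E_elem' (x : X) (v : V13 X m) :
    s(V13.elem x, v) ∈ E13 X m S ↔ (∃ i, x ∈ S i ∧ v = V13.sv i) ∨ v = V13.y := by
  simp [E13, Sym2.eq_iff]

end helpers

/-- the constructed graph has a minimal dominating set containing `U'`
iff the set system has an inclusion-minimal hitting set containing `U`. -/
theorem stmt_13 (X : Type) [Fintype X] (m : ℕ) (S : Fin m → Set X) (U : Set X) :
    (∃ D : Set (V13 X m), U13 X m U ⊆ D ∧ DomSet (E13 X m S) D ∧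
        ∀ D' : Set (V13 X m), D' ⊂ D → ¬ DomSet (E13 X m S) D') ↔
      (∃ H : Set X, U ⊆ H ∧ (∀ i : Fin m, (H ∩ S i).Nonempty) ∧
        ∀ H' : Set X, H' ⊂ H → ¬ ∀ i : Fin m, (H' ∩ S i).Nonempty) := by
  constructor
  · -- forward direction
    rintro ⟨D, hUD, hdom, hmin⟩
    have hy : V13.y ∈ D := hUD (Or.inr (by simp))
    have hz2 : V13.z2 ∈ D := hUD (Or.inr (by simp))
    have hz3 : V13.z3 ∈ D := hUD (Or.inr (by simp))
    set H : Set X := {x | V13.elem x ∈ D} with hH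
    -- Step A: z1 ∉ D and no sv i ∈ D
    have stepA : (V13.z1 : V13 X m) ∉ D ∧ ∀ i : Fin m, V13.sv (X := X) i ∉ D := by
      have h1 := hmin (D \ {V13.z2}) (Set.sdiff_singleton_ssubset.mpr hz2)
      rw [DomSet] at h1; push_neg at h1
      obtain ⟨v, hv1, hv2⟩ := h1
      have hvz1 : v = V13.z1 ∧ v ∉ D := by
        by_cases hvD : v ∈ D
        · exfalso
          have hvz2 : v = V13.z2 := by
            by_contra h; exact hv1 ⟨hvD, h⟩
          subst hvz2
          exact hv2 V13.z3 ⟨hz3, by simp⟩ (by simp [E13, Sym2.eq_iff])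
        · rcases hdom v with h | ⟨u, huD, hue⟩
          · exact absurd h hvD
          have huz2 : u = V13.z2 := by
            by_contra h; exact hv2 u ⟨huD, h⟩ hue
          subst huz2
          rw [mem_E_z2'] at hue
          rcases hue with rfl | rfl
          · exact ⟨rfl, hvD⟩
          · exact absurd hz3 hvD
      obtain ⟨rfl, hz1D⟩ := hvz1
      refine ⟨hz1D, fun i hsvD => ?_⟩
      exact hv2 (V13.sv i) ⟨hsvD, by simp⟩ ((mem_E_z1' _).mpr (Or.inr ⟨i, rfl⟩))
    obtain ⟨hz1D, hsvD⟩ := stepA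
    -- Step B: H is a hitting set
    have hhit : ∀ i : Fin m, (H ∩ S i).Nonempty := by
      intro i
      rcases hdom (V13.sv i) with h | ⟨u, huD, hue⟩
      · exact absurd h (hsvD i)
      rw [mem_E_sv'] at hue
      rcases hue with ⟨x, hxS, rfl⟩ | rfl
      · exact ⟨x, huD, hxS⟩
      · exact absurd huD hz1D
    refine ⟨H, fun x hxU => hUD (Or.inl ⟨x, hxU, rfl⟩), hhit, ?_⟩
    -- Step C: minimality of H
    intro H' hss hH'
    obtain ⟨x, hxH, hxH'⟩ := Set.exists_of_ssubset hss
    have hxD : V13.elem x ∈ D := hxH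
    have h1 := hmin (D \ {V13.elem x}) (Set.sdiff_singleton_ssubset.mpr hxD)
    rw [DomSet] at h1; push_neg at h1
    obtain ⟨v, hv1, hv2⟩ := h1
    -- identify v = sv i with x ∈ S i and x the only D-element of S i
    have hvnD : v ∉ D := by
      intro hvD
      have hvx : v = V13.elem x := by
        by_contra h; exact hv1 ⟨hvD, h⟩
      subst hvx
      exact hv2 V13.y ⟨hy, by simp⟩ (by simp [E13, Sym2.eq_iff])
    rcases hdom v with h | ⟨u, huD, hue⟩
    · exact absurd h hvnD
    have hux : u = V13.elem x := by
      by_contra h; exact hv2 u ⟨huD, h⟩ hue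
    subst hux
    rw [mem_E_elem'] at hue
    rcases hue with ⟨i, hxS, rfl⟩ | rfl
    · -- v = sv i; get a contradiction from H' hitting S i
      obtain ⟨x', hx'H', hx'S⟩ := hH' i
      have hx'H : V13.elem x' ∈ D := hss.1 hx'H'
      have hne : (V13.elem x' : V13 X m) ≠ V13.elem x := by
        intro h
        exact hxH' (by rwa [show x' = x by injection h] at hx'H')
      exact hv2 (V13.elem x') ⟨hx'H, hne⟩
        ((mem_E_sv' _ i).mpr (Or.inl ⟨x', hx'S, rfl⟩))
    · exact absurd hy hvnD
  · -- backward direction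
    rintro ⟨H, hUH, hhit, hmin⟩
    refine ⟨(V13.elem '' H) ∪ {V13.y, V13.z2, V13.z3}, ?_, ?_, ?_⟩
    · rintro v (⟨x, hxU, rfl⟩ | hv)
      · exact Or.inl ⟨x, hUH hxU, rfl⟩
      · exact Or.inr hv
    · -- dominating
      intro v
      cases v with
      | elem x => exact Or.inr ⟨V13.y, Or.inr (by simp),
          by rw [Sym2.eq_swap, mem_E_elem']; exact Or.inr rfl⟩
      | sv i =>
          obtain ⟨x, hxH, hxS⟩ := hhit i
          exact Or.inr ⟨V13.elem x, Or.inl ⟨x, hxH, rfl⟩,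
            (mem_E_sv' _ i).mpr (Or.inl ⟨x, hxS, rfl⟩)⟩
      | y => exact Or.inl (Or.inr (by simp))
      | y' => exact Or.inr ⟨V13.y, Or.inr (by simp), (mem_E_y'' _).mpr rfl⟩
      | z1 => exact Or.inr ⟨V13.z2, Or.inr (by simp), (mem_E_z1' _).mpr (Or.inl rfl)⟩
      | z2 => exact Or.inl (Or.inr (by simp))
      | z3 => exact Or.inl (Or.inr (by simp))
      | z4 => exact Or.inr ⟨V13.z3, Or.inr (by simp), (mem_E_z4' _).mpr rfl⟩
    · -- minimality
      intro D' hss hdom'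
      obtain ⟨v, hvD, hvD'⟩ := Set.exists_of_ssubset hss
      have hsub := hss.1
      rcases hvD with ⟨x, hxH, rfl⟩ | hv
      · -- removed an element vertex
        have hHx : H \ {x} ⊂ H := Set.sdiff_singleton_ssubset.mpr hxH
        have := hmin (H \ {x}) hHx
        push_neg at this
        obtain ⟨i, hi⟩ := this
        rcases hdom' (V13.sv i) with h | ⟨u, huD', hue⟩
        · rcases hsub h with ⟨x', _, hx'⟩ | h' <;> simp_all
        · rw [mem_E_sv'] at hue
          rcases hue with ⟨x', hx'S, rfl⟩ | rfl
          · have hx'H : x' ∈ H := by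
              rcases hsub huD' with ⟨x'', hx''H, hx''⟩ | h' <;> simp_all
            have hx'ne : x' ≠ x := by
              rintro rfl; exact hvD' huD'
            have : x' ∈ H \ {x} ∩ S i := ⟨⟨hx'H, hx'ne⟩, hx'S⟩
            rw [hi] at this
            exact this
          · rcases hsub huD' with ⟨x'', _, hx''⟩ | h' <;> simp_all
      · -- removed y, z2, or z3
        rcases hv with rfl | rfl | rfl
        · -- removed y : y' is undominated
          rcases hdom' V13.y' with h | ⟨u, huD', hue⟩
          · rcases hsub h with ⟨x', _, hx'⟩ | h' <;> simp_all
          · rw [mem_E_y''] at hue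
            subst hue
            exact hvD' huD'
        · -- removed z2 : z1 is undominated
          rcases hdom' V13.z1 with h | ⟨u, huD', hue⟩
          · rcases hsub h with ⟨x', _, hx'⟩ | h' <;> simp_all
          · rw [mem_E_z1'] at hue
            rcases hue with rfl | ⟨i, rfl⟩
            · exact hvD' huD'
            · rcases hsub huD' with ⟨x', _, hx'⟩ | h' <;> simp_all
        · -- removed z3 : z4 is undominated
          rcases hdom' V13.z4 with h | ⟨u, huD', hue⟩
          · rcases hsub h with ⟨x', _, hx'⟩ | h' <;> simp_all
          · rw [mem_E_z4'] at hue
            subst hue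
            exact hvD' huD'
end

section
/- Let G = (V,E) be a finite simple bipartite graph with bipartition V = V₁ ∪ V₂ (every edge joining V₁ to V₂), and let U ⊆ V. Build the finite simple graph G' = (V',E') with V' = V ∪ {x₁, y₁, z₁, x₂, y₂, z₂} and E' = E ∪ {x₁y₁, y₁z₁, x₂y₂, y₂z₂} ∪ {vx₁ : v ∈ V₁} ∪ {vx₂ : v ∈ V₂}. Let U' = {ux₁ : u ∈ U∩V₁} ∪ {ux₂ : u ∈ U∩V₂} ∪ {x₁y₁, x₂y₂}. Then G' has a minimal edge dominating set S' with U' ⊆ S' if and only if G has a minimal vertex cover S with U ⊆ S. -/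
/-- Vertices of the graph `G'` built from a bipartite graph `G`: the original vertices
together with the six new vertices `x₁, y₁, z₁, x₂, y₂, z₂`. -/
inductive V14 (V : Type) : Type
  | orig : V → V14 V
  | x1 : V14 V
  | y1 : V14 V
  | z1 : V14 V
  | x2 : V14 V
  | y2 : V14 V
  | z2 : V14 V

/-- Edges of `G'`: the edges of `G`, the two paths `x₁y₁z₁`, `x₂y₂z₂`, and the edges
from `V₁` to `x₁` and from `V₂` to `x₂`. -/
def E14 {V : Type} (G : SimpleGraph V) (V1 V2 : Set V) : Set (Sym2 (V14 V)) :=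
  {e | (∃ u v : V, G.Adj u v ∧ e = s(V14.orig u, V14.orig v)) ∨
       e = s(V14.x1, V14.y1) ∨ e = s(V14.y1, V14.z1) ∨
       e = s(V14.x2, V14.y2) ∨ e = s(V14.y2, V14.z2) ∨
       (∃ v ∈ V1, e = s(V14.orig v, V14.x1)) ∨
       (∃ v ∈ V2, e = s(V14.orig v, V14.x2))}

/-- The pre-solution `U' = {ux₁ : u ∈ U∩V₁} ∪ {ux₂ : u ∈ U∩V₂} ∪ {x₁y₁, x₂y₂}`. -/
def U14 {V : Type} (V1 V2 U : Set V) : Set (Sym2 (V14 V)) :=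
  {e | (∃ u ∈ U ∩ V1, e = s(V14.orig u, V14.x1)) ∨
       (∃ u ∈ U ∩ V2, e = s(V14.orig u, V14.x2)) ∨
       e = s(V14.x1, V14.y1) ∨ e = s(V14.x2, V14.y2)}

/-- `D` dominates every edge of `E`: each edge of `E` is in `D` or shares an endpoint
with an edge of `D`. -/
def EDSDom {V : Type*} (E D : Set (Sym2 V)) : Prop :=
  ∀ e ∈ E, e ∈ D ∨ ∃ f ∈ D, ∃ v : V, v ∈ e ∧ v ∈ f

/-- `G'` has a minimal edge dominating set containing `U'` iff the
bipartite graph `G` has a minimal vertex cover containing `U`. -/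
theorem stmt_14 {V : Type} [Fintype V] (G : SimpleGraph V)
    (V1 V2 : Set V) (hUnion : V1 ∪ V2 = Set.univ) (hDisj : V1 ∩ V2 = ∅)
    (hBip : ∀ u v : V, G.Adj u v → (u ∈ V1 ∧ v ∈ V2) ∨ (u ∈ V2 ∧ v ∈ V1))
    (U : Set V) :
    (∃ S' : Set (Sym2 (V14 V)), S' ⊆ E14 G V1 V2 ∧ U14 V1 V2 U ⊆ S' ∧
        EDSDom (E14 G V1 V2) S' ∧
        ∀ D' : Set (Sym2 (V14 V)), D' ⊂ S' → ¬ EDSDom (E14 G V1 V2) D') ↔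
      (∃ S : Set V, U ⊆ S ∧ IsVertexCoverOf G.edgeSet S ∧
        ∀ S'' : Set V, S'' ⊂ S → ¬ IsVertexCoverOf G.edgeSet S'') := by

  have hdisj : ∀ {v : V}, v ∈ V1 → v ∈ V2 → False := by
    intro v h1 h2
    have hv : v ∈ V1 ∩ V2 := ⟨h1, h2⟩
    rw [hDisj] at hv
    exact hv
  have huniv : ∀ v : V, v ∈ V1 ∨ v ∈ V2 := by
    intro v
    have hv : v ∈ V1 ∪ V2 := by rw [hUnion]; trivial
    exact hv
  constructor
  · -- forward: minimal EDS of G' gives minimal VC of G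
    rintro ⟨S', hsub, hU, hdom, hmin⟩
    set S : Set V := {v | ∃ f ∈ S', V14.orig v ∈ f} with hSdef
    have hx1y1 : s(V14.x1, V14.y1) ∈ S' := hU (Or.inr (Or.inr (Or.inl rfl)))
    have hx2y2 : s(V14.x2, V14.y2) ∈ S' := hU (Or.inr (Or.inr (Or.inr rfl)))
    have hcovS : IsVertexCoverOf G.edgeSet S := by
      intro e he
      revert he
      induction e using Sym2.ind with
      | _ a b =>
        intro he
        rw [SimpleGraph.mem_edgeSet] at he
        have hE : s(V14.orig a, V14.orig b) ∈ E14 G V1 V2 := Or.inl ⟨a, b, he, rfl⟩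
        rcases hdom _ hE with hin | ⟨f, hf, v, hve, hvf⟩
        · exact ⟨a, ⟨_, hin, by simp⟩, by simp⟩
        · rcases Sym2.mem_iff.mp hve with rfl | rfl
          · exact ⟨a, ⟨f, hf, hvf⟩, by simp⟩
          · exact ⟨b, ⟨f, hf, hvf⟩, by simp⟩
    have hUS : U ⊆ S := by
      intro u hu
      rcases huniv u with h1 | h2
      · exact ⟨_, hU (Or.inl ⟨u, ⟨hu, h1⟩, rfl⟩), by simp⟩
      · exact ⟨_, hU (Or.inr (Or.inl ⟨u, ⟨hu, h2⟩, rfl⟩)), by simp⟩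
    have hpriv : ∀ u ∈ U, ∃ w, G.Adj u w ∧ w ∉ S := by
      intro u hu
      have hf : ∃ x : V14 V, (x = V14.x1 ∨ x = V14.x2) ∧ s(V14.orig u, x) ∈ S' := by
        rcases huniv u with h1 | h2
        · exact ⟨_, Or.inl rfl, hU (Or.inl ⟨u, ⟨hu, h1⟩, rfl⟩)⟩
        · exact ⟨_, Or.inr rfl, hU (Or.inr (Or.inl ⟨u, ⟨hu, h2⟩, rfl⟩))⟩
      obtain ⟨x, hx, hfS⟩ := hf
      have hss : S' \ {s(V14.orig u, x)} ⊂ S' := Set.sdiff_singleton_ssubset.mpr hfS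
      have hne := hmin _ hss
      rw [EDSDom] at hne
      push_neg at hne
      obtain ⟨e, heE, henin, hnsh⟩ := hne
      have hshare : ∀ g ∈ S', g ≠ s(V14.orig u, x) → ∀ v, v ∈ e → v ∈ g → False :=
        fun g hg hgf v hv hv' => hnsh g (Set.mem_diff_singleton.mpr ⟨hg, hgf⟩) v hv hv'
      have hne1 : s(V14.x1, V14.y1) ≠ s(V14.orig u, x) := by
        rcases hx with rfl | rfl <;> simp [Sym2.eq_iff]
      have hne2 : s(V14.x2, V14.y2) ≠ s(V14.orig u, x) := by
        rcases hx with rfl | rfl <;> simp [Sym2.eq_iff]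
      rcases heE with ⟨a, b, hab, rfl⟩ | rfl | rfl | rfl | rfl | ⟨t, ht, rfl⟩ | ⟨t, ht, rfl⟩
      · -- main case : e is an original edge
        have key : ∀ w : V, G.Adj u w →
            (V14.orig w : V14 V) ∈ s(V14.orig a, V14.orig b) → w ∉ S := by
          rintro w hadj' hwe ⟨h, hhS', hwh⟩
          have hhf : h ≠ s(V14.orig u, x) := by
            rintro rfl
            rcases Sym2.mem_iff.mp hwh with h' | h'
            · exact hadj'.ne (V14.orig.inj h').symm
            · rcases hx with rfl | rfl <;> simp at h'
          exact hshare h hhS' hhf _ hwe hwh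
        have henS : s(V14.orig a, V14.orig b) ∉ S' := by
          intro h
          have heq : (s(V14.orig a, V14.orig b) : Sym2 (V14 V)) = s(V14.orig u, x) := by
            by_contra hne'
            exact henin (Set.mem_diff_singleton.mpr ⟨h, hne'⟩)
          rcases hx with rfl | rfl <;> simp [Sym2.eq_iff] at heq
        rcases hdom _ (Or.inl ⟨a, b, hab, rfl⟩) with hin | ⟨g, hgS, v, hve, hvg⟩
        · exact absurd hin henS
        · have hgf : g = s(V14.orig u, x) := by
            by_contra hne'
            exact hshare g hgS hne' v hve hvg
          subst hgf
          have hv : v = V14.orig u := by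
            rcases Sym2.mem_iff.mp hvg with rfl | rfl
            · rfl
            · rcases hx with rfl | rfl <;> simp [Sym2.mem_iff] at hve
          subst hv
          rcases Sym2.mem_iff.mp hve with h | h
          · obtain rfl : u = a := V14.orig.inj h
            exact ⟨b, hab, key b hab (by simp)⟩
          · obtain rfl : u = b := V14.orig.inj h
            exact ⟨a, hab.symm, key a hab.symm (by simp)⟩
      · exact (hshare _ hx1y1 hne1 V14.x1 (by simp) (by simp)).elim
      · exact (hshare _ hx1y1 hne1 V14.y1 (by simp) (by simp)).elim
      · exact (hshare _ hx2y2 hne2 V14.x2 (by simp) (by simp)).elim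
      · exact (hshare _ hx2y2 hne2 V14.y2 (by simp) (by simp)).elim
      · exact (hshare _ hx1y1 hne1 V14.x1 (by simp) (by simp)).elim
      · exact (hshare _ hx2y2 hne2 V14.x2 (by simp) (by simp)).elim
    -- now take a minimal cover between U and S
    obtain ⟨T, ⟨hTU, hTS, hTcov⟩, hTmin⟩ : ∃ T ∈ {T : Set V | U ⊆ T ∧ T ⊆ S ∧ IsVertexCoverOf G.edgeSet T},
        ∀ T' ∈ {T : Set V | U ⊆ T ∧ T ⊆ S ∧ IsVertexCoverOf G.edgeSet T}, id T' ≤ id T → id T = id T' := by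
      obtain ⟨T, hT, hTm⟩ := Set.Finite.exists_minimalFor id
        {T : Set V | U ⊆ T ∧ T ⊆ S ∧ IsVertexCoverOf G.edgeSet T}
        (Set.toFinite _) ⟨S, hUS, subset_rfl, hcovS⟩
      exact ⟨T, hT, fun T' hT' hle => le_antisymm (hTm hT' hle) hle⟩
    refine ⟨T, hTU, hTcov, ?_⟩
    intro S'' hS'' hScov
    obtain ⟨v, hvT, hvS''⟩ := Set.exists_of_ssubset hS''
    have hTv_cov : IsVertexCoverOf G.edgeSet (T \ {v}) := by
      intro e he
      obtain ⟨w, hw, hwe⟩ := hScov e he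
      refine ⟨w, Set.mem_diff_singleton.mpr ⟨hS''.subset hw, ?_⟩, hwe⟩
      rintro rfl
      exact hvS'' hw
    by_cases hvU : v ∈ U
    · obtain ⟨w, hadj, hwS⟩ := hpriv v hvU
      obtain ⟨t, ht, hte⟩ := hTv_cov s(v, w) (G.mem_edgeSet.mpr hadj)
      rcases Sym2.mem_iff.mp hte with rfl | rfl
      · exact (Set.mem_diff_singleton.mp ht).2 rfl
      · exact hwS (hTS (Set.mem_diff_singleton.mp ht).1)
    · have hmem : T \ {v} ∈ {T : Set V | U ⊆ T ∧ T ⊆ S ∧ IsVertexCoverOf G.edgeSet T} := by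
        refine ⟨?_, Set.diff_subset.trans hTS, hTv_cov⟩
        intro u hu
        refine Set.mem_diff_singleton.mpr ⟨hTU hu, ?_⟩
        rintro rfl
        exact hvU hu
      have heq := hTmin _ hmem Set.diff_subset
      simp only [id] at heq
      have hvv : v ∈ T \ {v} := by rw [← heq]; exact hvT
      exact hvv.2 rfl
  · -- backward: minimal VC of G gives minimal EDS of G'
    rintro ⟨S, hUS, hcov, hmin⟩
    refine ⟨U14 V1 V2 S, ?_, ?_, ?_, ?_⟩
    · rintro e (⟨t, ⟨htS, ht1⟩, rfl⟩ | ⟨t, ⟨htS, ht2⟩, rfl⟩ | rfl | rfl)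
      · exact Or.inr (Or.inr (Or.inr (Or.inr (Or.inr (Or.inl ⟨t, ht1, rfl⟩)))))
      · exact Or.inr (Or.inr (Or.inr (Or.inr (Or.inr (Or.inr ⟨t, ht2, rfl⟩)))))
      · exact Or.inr (Or.inl rfl)
      · exact Or.inr (Or.inr (Or.inr (Or.inl rfl)))
    · rintro e (⟨t, ⟨htU, ht1⟩, rfl⟩ | ⟨t, ⟨htU, ht2⟩, rfl⟩ | rfl | rfl)
      · exact Or.inl ⟨t, ⟨hUS htU, ht1⟩, rfl⟩
      · exact Or.inr (Or.inl ⟨t, ⟨hUS htU, ht2⟩, rfl⟩)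
      · exact Or.inr (Or.inr (Or.inl rfl))
      · exact Or.inr (Or.inr (Or.inr rfl))
    · -- domination
      have hmem : ∀ w ∈ S, ∃ f ∈ U14 V1 V2 S, (V14.orig w : V14 V) ∈ f := by
        intro w hw
        rcases huniv w with h1 | h2
        · exact ⟨_, Or.inl ⟨w, ⟨hw, h1⟩, rfl⟩, by simp⟩
        · exact ⟨_, Or.inr (Or.inl ⟨w, ⟨hw, h2⟩, rfl⟩), by simp⟩
      rintro e (⟨a, b, hab, rfl⟩ | rfl | rfl | rfl | rfl | ⟨t, ht, rfl⟩ | ⟨t, ht, rfl⟩)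
      · obtain ⟨w, hwS, hwe⟩ := hcov _ (G.mem_edgeSet.mpr hab)
        obtain ⟨f, hf, hforig⟩ := hmem w hwS
        refine Or.inr ⟨f, hf, V14.orig w, ?_, hforig⟩
        rcases Sym2.mem_iff.mp hwe with rfl | rfl <;> simp
      · exact Or.inl (Or.inr (Or.inr (Or.inl rfl)))
      · exact Or.inr ⟨_, Or.inr (Or.inr (Or.inl rfl)), V14.y1, by simp, by simp⟩
      · exact Or.inl (Or.inr (Or.inr (Or.inr rfl)))
      · exact Or.inr ⟨_, Or.inr (Or.inr (Or.inr rfl)), V14.y2, by simp, by simp⟩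
      · exact Or.inr ⟨_, Or.inr (Or.inr (Or.inl rfl)), V14.x1, by simp, by simp⟩
      · exact Or.inr ⟨_, Or.inr (Or.inr (Or.inr rfl)), V14.x2, by simp, by simp⟩
    · -- minimality
      intro D' hD' hdomD
      obtain ⟨g, hgS, hgD⟩ := Set.exists_of_ssubset hD'
      have hDsub := hD'.subset
      have main1 : ∀ t b : V, G.Adj t b → t ∈ S → b ∉ S →
          s(V14.orig t, V14.x1) ∉ D' → t ∈ V1 → False := by
        intro t b hab htS hb hgD' ht1
        rcases hdomD _ (Or.inl ⟨t, b, hab, rfl⟩) with hin | ⟨f, hfD, v, hve, hvf⟩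
        · rcases hDsub hin with ⟨r, _, hr⟩ | ⟨r, _, hr⟩ | hr | hr <;>
            simp [Sym2.eq_iff] at hr
        · have hvz := Sym2.mem_iff.mp hve
          rcases hDsub hfD with ⟨r, ⟨hrS, hr1⟩, rfl⟩ | ⟨r, ⟨hrS, hr2⟩, rfl⟩ | rfl | rfl
          · rcases Sym2.mem_iff.mp hvf with rfl | rfl
            · rcases hvz with h | h
              · obtain rfl : r = t := V14.orig.inj h
                exact hgD' hfD
              · obtain rfl : r = b := V14.orig.inj h
                exact hb hrS
            · simp at hvz
          · rcases Sym2.mem_iff.mp hvf with rfl | rfl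
            · rcases hvz with h | h
              · obtain rfl : r = t := V14.orig.inj h
                exact hdisj ht1 hr2
              · obtain rfl : r = b := V14.orig.inj h
                exact hb hrS
            · simp at hvz
          · rcases Sym2.mem_iff.mp hvf with rfl | rfl <;> simp at hvz
          · rcases Sym2.mem_iff.mp hvf with rfl | rfl <;> simp at hvz
      have main2 : ∀ t b : V, G.Adj t b → t ∈ S → b ∉ S →
          s(V14.orig t, V14.x2) ∉ D' → t ∈ V2 → False := by
        intro t b hab htS hb hgD' ht2
        rcases hdomD _ (Or.inl ⟨t, b, hab, rfl⟩) with hin | ⟨f, hfD, v, hve, hvf⟩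
        · rcases hDsub hin with ⟨r, _, hr⟩ | ⟨r, _, hr⟩ | hr | hr <;>
            simp [Sym2.eq_iff] at hr
        · have hvz := Sym2.mem_iff.mp hve
          rcases hDsub hfD with ⟨r, ⟨hrS, hr1⟩, rfl⟩ | ⟨r, ⟨hrS, hr2⟩, rfl⟩ | rfl | rfl
          · rcases Sym2.mem_iff.mp hvf with rfl | rfl
            · rcases hvz with h | h
              · obtain rfl : r = t := V14.orig.inj h
                exact hdisj hr1 ht2
              · obtain rfl : r = b := V14.orig.inj h
                exact hb hrS
            · simp at hvz
          · rcases Sym2.mem_iff.mp hvf with rfl | rfl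
            · rcases hvz with h | h
              · obtain rfl : r = t := V14.orig.inj h
                exact hgD' hfD
              · obtain rfl : r = b := V14.orig.inj h
                exact hb hrS
            · simp at hvz
          · rcases Sym2.mem_iff.mp hvf with rfl | rfl <;> simp at hvz
          · rcases Sym2.mem_iff.mp hvf with rfl | rfl <;> simp at hvz
      rcases hgS with ⟨t, ⟨htS, ht1⟩, rfl⟩ | ⟨t, ⟨htS, ht2⟩, rfl⟩ | rfl | rfl
      · -- g = (orig t, x1)
        have hss : S \ {t} ⊂ S := Set.sdiff_singleton_ssubset.mpr htS
        have hnc := hmin _ hss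
        rw [IsVertexCoverOf] at hnc
        push_neg at hnc
        obtain ⟨e, heE, hecov⟩ := hnc
        revert heE hecov
        induction e using Sym2.ind with
        | _ a b =>
          intro heE hecov
          have hab : G.Adj a b := G.mem_edgeSet.mp heE
          obtain ⟨w, hwS, hwe⟩ := hcov _ heE
          obtain rfl : w = t := by
            by_contra hne'
            exact hecov w (Set.mem_diff_singleton.mpr ⟨hwS, hne'⟩) hwe
          rcases Sym2.mem_iff.mp hwe with rfl | rfl
          · have hb : b ∉ S := fun hbS =>
              hecov b (Set.mem_diff_singleton.mpr ⟨hbS, hab.ne'⟩) (by simp)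
            exact main1 w b hab hwS hb hgD ht1
          · have ha : a ∉ S := fun haS =>
              hecov a (Set.mem_diff_singleton.mpr ⟨haS, hab.ne⟩) (by simp)
            exact main1 w a hab.symm hwS ha hgD ht1
      · -- g = (orig t, x2)
        have hss : S \ {t} ⊂ S := Set.sdiff_singleton_ssubset.mpr htS
        have hnc := hmin _ hss
        rw [IsVertexCoverOf] at hnc
        push_neg at hnc
        obtain ⟨e, heE, hecov⟩ := hnc
        revert heE hecov
        induction e using Sym2.ind with
        | _ a b =>
          intro heE hecov
          have hab : G.Adj a b := G.mem_edgeSet.mp heE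
          obtain ⟨w, hwS, hwe⟩ := hcov _ heE
          obtain rfl : w = t := by
            by_contra hne'
            exact hecov w (Set.mem_diff_singleton.mpr ⟨hwS, hne'⟩) hwe
          rcases Sym2.mem_iff.mp hwe with rfl | rfl
          · have hb : b ∉ S := fun hbS =>
              hecov b (Set.mem_diff_singleton.mpr ⟨hbS, hab.ne'⟩) (by simp)
            exact main2 w b hab hwS hb hgD ht2
          · have ha : a ∉ S := fun haS =>
              hecov a (Set.mem_diff_singleton.mpr ⟨haS, hab.ne⟩) (by simp)
            exact main2 w a hab.symm hwS ha hgD ht2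
      · -- g = x1y1 : edge y1z1 undominated
        rcases hdomD _ (Or.inr (Or.inr (Or.inl rfl))) with hin | ⟨f, hfD, v, hve, hvf⟩
        · rcases hDsub hin with ⟨r, _, hr⟩ | ⟨r, _, hr⟩ | hr | hr <;>
            simp [Sym2.eq_iff] at hr
        · have hvz := Sym2.mem_iff.mp hve
          rcases hDsub hfD with ⟨r, _, rfl⟩ | ⟨r, _, rfl⟩ | rfl | rfl
          · rcases Sym2.mem_iff.mp hvf with rfl | rfl <;> simp at hvz
          · rcases Sym2.mem_iff.mp hvf with rfl | rfl <;> simp at hvz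
          · exact hgD hfD
          · rcases Sym2.mem_iff.mp hvf with rfl | rfl <;> simp at hvz
      · -- g = x2y2 : edge y2z2 undominated
        rcases hdomD _ (Or.inr (Or.inr (Or.inr (Or.inr (Or.inl rfl))))) with
          hin | ⟨f, hfD, v, hve, hvf⟩
        · rcases hDsub hin with ⟨r, _, hr⟩ | ⟨r, _, hr⟩ | hr | hr <;>
            simp [Sym2.eq_iff] at hr
        · have hvz := Sym2.mem_iff.mp hve
          rcases hDsub hfD with ⟨r, _, rfl⟩ | ⟨r, _, rfl⟩ | rfl | rfl
          · rcases Sym2.mem_iff.mp hvf with rfl | rfl <;> simp at hvz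
          · rcases Sym2.mem_iff.mp hvf with rfl | rfl <;> simp at hvz
          · rcases Sym2.mem_iff.mp hvf with rfl | rfl <;> simp at hvz
          · exact hgD hfD
end
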